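/- arXiv:2401.13911 — 8 statements merged into one kernel-verified Lean document; each statement's English description precedes it below -/
import Mathlib

section
/- Let n ≥ 3 and let A be an n×n complex matrix. Write A^(n-1) (resp. A^(n-2)) for its upper-left (n−1)×(n−1) (resp. (n−2)×(n−2)) submatrix, and let λ_1,…,λ_{n-1} ∈ ℂ be a listing of the eigenvalues of A^(n-1) with multiplicity, i.e. det(A^(n-1) − x·Id_{n-1}) = ∏_{l=1}^{n-1}(λ_l − x) for all x ∈ ℂ. Define the (n−1)×(n−1) matrices 𝒫 and 𝒬 by 𝒫_{jk} = (−1)^{j+k} · det of the (n−2)×(n−2) submatrix of A^(n-1) − λ_k·Id obtained by deleting row n−1 and column j, and 𝒬_{ij} = (−1)^{i+j} · det of the (n−2)×(n−2) submatrix of A^(n-1) − λ_i·Id obtained by deleting row j and column n−1. Then: (i) A^(n-1)·𝒫 = 𝒫·diag(λ_1,…,λ_{n-1}); (ii) 𝒬·A^(n-1) = diag(λ_1,…,λ_{n-1})·𝒬; (iii) 𝒬·𝒫 = D, where D is the diagonal matrix with entries D_i = −χ′(λ_i)·det(A^(n-2) − λ_i·Id_{n-2}), with χ(x) = det(A^(n-1)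 − x·Id_{n-1}) and χ′ its derivative (equivalently D_i = ∏_{l≠i}(λ_l − λ_i) · ∏_{l=1}^{n-2}(λ^(n-2)_l − λ_i), where λ^(n-2)_l are the eigenvalues of A^(n-2)). -/
open Matrix Finset

noncomputable section

private lemma aux_mul_adj {n : ℕ} (M : Matrix (Fin n) (Fin n) ℂ) (μ : ℂ) (h : M.det = 0) :
    (M + μ • 1) * adjugate M = μ • adjugate M := by
  rw [add_mul, Matrix.mul_adjugate, h, zero_smul, zero_add, Matrix.smul_mul, Matrix.one_mul]

private lemma aux_adj_mul {n : ℕ} (M : Matrix (Fin n) (Fin n) ℂ) (μ : ℂ) (h : M.det = 0) :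
    adjugate M * (M + μ • 1) = μ • adjugate M := by
  rw [mul_add, Matrix.adjugate_mul, h, zero_smul, zero_add, Matrix.mul_smul, Matrix.mul_one]

/-- Properties of the matrices 𝒫, 𝒬 diagonalizing the upper-left
submatrix `A^(n-1)` of an `n × n` complex matrix `A` (here `n = m+3 ≥ 3`). -/
theorem stmt0 (m : ℕ) (A : Matrix (Fin (m+3)) (Fin (m+3)) ℂ)
    (lam : Fin (m+2) → ℂ)
    (hlam : ∀ x : ℂ,
      (A.submatrix Fin.castSucc Fin.castSucc
        - x • (1 : Matrix (Fin (m+2)) (Fin (m+2)) ℂ)).det = ∏ l, (lam l - x)) :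
    -- `B = A^(n-1)`, `B2 = A^(n-2)`
    let B : Matrix (Fin (m+2)) (Fin (m+2)) ℂ := A.submatrix Fin.castSucc Fin.castSucc
    let B2 : Matrix (Fin (m+1)) (Fin (m+1)) ℂ :=
      A.submatrix (Fin.castLE (show m+1 ≤ m+3 by omega)) (Fin.castLE (show m+1 ≤ m+3 by omega))
    -- 𝒫_{jk} = (−1)^{j+k} · minor of `B − λ_k·Id` deleting row n−1 and column j
    let P : Matrix (Fin (m+2)) (Fin (m+2)) ℂ := fun j k =>
      (-1 : ℂ) ^ (j.val + k.val) *
        ((B - lam k • 1).submatrix (Fin.last (m+1)).succAbove j.succAbove).det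
    -- 𝒬_{ij} = (−1)^{i+j} · minor of `B − λ_i·Id` deleting row j and column n−1
    let Q : Matrix (Fin (m+2)) (Fin (m+2)) ℂ := fun i j =>
      (-1 : ℂ) ^ (i.val + j.val) *
        ((B - lam i • 1).submatrix j.succAbove (Fin.last (m+1)).succAbove).det
    -- D_i = −χ′(λ_i) · det(A^(n-2) − λ_i·Id)
    let D : Fin (m+2) → ℂ := fun i =>
      -(deriv (fun x : ℂ => (B - x • 1).det) (lam i)) * (B2 - lam i • 1).det
    B * P = P * Matrix.diagonal lam ∧
    Q * B = Matrix.diagonal lam * Q ∧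
    Q * P = Matrix.diagonal D := by
  
  intro B B2 P Q D
  set L : Fin (m+2) := Fin.last (m+1) with hL
  -- sign helper
  have hsign : ∀ a b : ℕ, ((-1 : ℂ)) ^ (a + (m+1)) * (-1) ^ ((m+1) + b) = (-1) ^ (b + a) := by
    intro a b
    rw [← pow_add]
    have : a + (m+1) + ((m+1) + b) = (b + a) + 2 * (m+1) := by ring
    rw [this, pow_add, pow_mul, neg_one_sq, one_pow, mul_one]
  set c : Fin (m+2) → ℂ := fun k => (-1 : ℂ) ^ (k.val + (m+1)) with hc
  -- P and Q in terms of adjugates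
  have hP : ∀ j k, P j k = c k * adjugate (B - lam k • 1) j L := by
    intro j k
    rw [adjugate_fin_succ_eq_det_submatrix]
    show _ = c k * ((-1 : ℂ) ^ ((L : ℕ) + (j : ℕ)) * _)
    rw [← mul_assoc, hc]
    simp only [hL, Fin.val_last]
    rw [hsign]
  have hQ : ∀ i j, Q i j = c i * adjugate (B - lam i • 1) L j := by
    intro i j
    rw [adjugate_fin_succ_eq_det_submatrix]
    show _ = c i * ((-1 : ℂ) ^ ((j : ℕ) + (L : ℕ)) * _)
    rw [← mul_assoc, hc]
    simp only [hL, Fin.val_last]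
    rw [add_comm (j : ℕ) (m+1), hsign, add_comm (j : ℕ) (i : ℕ)]
  have hdet0 : ∀ k, (B - lam k • 1).det = 0 := by
    intro k
    rw [hlam]
    exact Finset.prod_eq_zero (mem_univ k) (sub_self _)
  have hBsplit : ∀ k : Fin (m+2), (B - lam k • 1) + lam k • 1 = B := fun k => by abel
  have hBadj : ∀ k : Fin (m+2),
      B * adjugate (B - lam k • 1) = lam k • adjugate (B - lam k • 1) := by
    intro k
    have h := aux_mul_adj (B - lam k • 1) (lam k) (hdet0 k)
    rwa [hBsplit k] at h
  have hadjB : ∀ i : Fin (m+2),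
      adjugate (B - lam i • 1) * B = lam i • adjugate (B - lam i • 1) := by
    intro i
    have h := aux_adj_mul (B - lam i • 1) (lam i) (hdet0 i)
    rwa [hBsplit i] at h
  -- (i)
  have h1 : B * P = P * Matrix.diagonal lam := by
    ext j k
    rw [Matrix.mul_apply, Matrix.mul_diagonal]
    have e := congrFun (congrFun (hBadj k) j) L
    rw [Matrix.mul_apply, Matrix.smul_apply, smul_eq_mul] at e
    calc ∑ t, B j t * P t k
        = c k * ∑ t, B j t * adjugate (B - lam k • 1) t L := by
          rw [Finset.mul_sum]; exact Finset.sum_congr rfl fun t _ => by rw [hP]; ring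
      _ = c k * (lam k * adjugate (B - lam k • 1) j L) := by rw [e]
      _ = P j k * lam k := by rw [hP]; ring
  -- (ii)
  have h2 : Q * B = Matrix.diagonal lam * Q := by
    ext i j
    rw [Matrix.mul_apply, Matrix.diagonal_mul]
    have e := congrFun (congrFun (hadjB i) L) j
    rw [Matrix.mul_apply, Matrix.smul_apply, smul_eq_mul] at e
    calc ∑ t, Q i t * B t j
        = c i * ∑ t, adjugate (B - lam i • 1) L t * B t j := by
          rw [Finset.mul_sum]; exact Finset.sum_congr rfl fun t _ => by rw [hQ]; ring
      _ = c i * (lam i * adjugate (B - lam i • 1) L j) := by rw [e]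
      _ = lam i * Q i j := by rw [hQ]; ring
  refine ⟨h1, h2, ?_⟩
  -- (iii)
  -- the minor of B - x•1 at (last,last) is B2 - x•1
  have hminor : ∀ x : ℂ, (B - x • 1).submatrix L.succAbove L.succAbove = B2 - x • 1 := by
    intro x
    ext r s
    simp only [Matrix.submatrix_apply, hL, Fin.succAbove_last, Matrix.sub_apply,
      Matrix.smul_apply, Matrix.one_apply, smul_eq_mul]
    have h1 : B r.castSucc s.castSucc = B2 r s := by
      show A _ _ = A _ _
      congr 1 <;> exact Fin.ext (by simp)
    rw [h1]
    simp [Fin.castSucc_inj]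
  have hpsi : ∀ x : ℂ, adjugate (B - x • 1) L L = (B2 - x • 1).det := by
    intro x
    rw [adjugate_fin_succ_eq_det_submatrix, hminor]
    have h : ((-1 : ℂ)) ^ ((L : ℕ) + (L : ℕ)) = 1 := by
      rw [← two_mul, pow_mul, neg_one_sq, one_pow]
    rw [h, one_mul]
  -- key two-variable identity
  have hkey : ∀ x y : ℂ,
      (x - y) • (adjugate (B - x • 1) * adjugate (B - y • 1))
        = (B - y • 1).det • adjugate (B - x • 1) - (B - x • 1).det • adjugate (B - y • 1) := by
    intro x y
    have h : (B - y • 1) - (B - x • 1)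
        = (x - y) • (1 : Matrix (Fin (m+2)) (Fin (m+2)) ℂ) := by
      rw [sub_smul]; abel
    calc (x - y) • (adjugate (B - x • 1) * adjugate (B - y • 1))
        = adjugate (B - x • 1) * ((x - y) • (1 : Matrix (Fin (m+2)) (Fin (m+2)) ℂ))
            * adjugate (B - y • 1) := by
          rw [Matrix.mul_smul, Matrix.mul_one, Matrix.smul_mul]
      _ = adjugate (B - x • 1) * ((B - y • 1) - (B - x • 1)) * adjugate (B - y • 1) := by rw [h]
      _ = adjugate (B - x • 1) * ((B - y • 1) * adjugate (B - y • 1))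
            - (adjugate (B - x • 1) * (B - x • 1)) * adjugate (B - y • 1) := by
          rw [Matrix.mul_sub, Matrix.sub_mul, Matrix.mul_assoc, Matrix.mul_assoc]
      _ = _ := by
          rw [Matrix.mul_adjugate, Matrix.adjugate_mul, Matrix.mul_smul, Matrix.mul_one,
            Matrix.smul_mul, Matrix.one_mul]
  -- entrywise version at (L, L)
  have hkeyE : ∀ x y : ℂ,
      (x - y) * (adjugate (B - x • 1) * adjugate (B - y • 1) :
          Matrix (Fin (m+2)) (Fin (m+2)) ℂ) L L
        = (B - y • 1).det * adjugate (B - x • 1) L L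
          - (B - x • 1).det * adjugate (B - y • 1) L L := by
    intro x y
    have e := congrFun (congrFun (hkey x y) L) L
    simpa [Matrix.smul_apply, Matrix.sub_apply, smul_eq_mul] using e
  -- for each i, the entry function below equals a polynomial everywhere
  have hFG : ∀ i : Fin (m+2), ∀ y : ℂ,
      (adjugate (B - lam i • 1) * adjugate (B - y • 1) :
          Matrix (Fin (m+2)) (Fin (m+2)) ℂ) L L
        = (B2 - lam i • 1).det * ∏ l ∈ univ.erase i, (lam l - y) := by
    intro i
    have hF : Continuous fun y : ℂ =>
        (adjugate (B - lam i • 1) * adjugate (B - y • 1) :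
          Matrix (Fin (m+2)) (Fin (m+2)) ℂ) L L := by
      have hBy : Continuous fun y : ℂ => B - y • (1 : Matrix (Fin (m+2)) (Fin (m+2)) ℂ) :=
        continuous_const.sub (continuous_id.smul continuous_const)
      exact (continuous_const.matrix_mul hBy.matrix_adjugate).matrix_elem L L
    have hG : Continuous fun y : ℂ =>
        (B2 - lam i • 1).det * ∏ l ∈ univ.erase i, (lam l - y) := by
      apply continuous_const.mul
      exact continuous_finset_prod _ fun l _ => continuous_const.sub continuous_id
    have hext := Continuous.ext_on (dense_compl_singleton (lam i)) hF hG ?_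
    · exact fun y => congrFun hext y
    · intro y hy
      have hy' : lam i - y ≠ 0 := by
        simp only [Set.mem_compl_iff, Set.mem_singleton_iff] at hy
        exact sub_ne_zero_of_ne (Ne.symm hy)
      apply mul_left_cancel₀ hy'
      rw [hkeyE (lam i) y, hdet0 i, zero_mul, sub_zero, hpsi, hlam,
        ← Finset.mul_prod_erase _ _ (mem_univ i)]
      ring
  -- compute deriv of χ at lam i
  have hderiv : ∀ i : Fin (m+2),
      deriv (fun x : ℂ => (B - x • 1).det) (lam i)
        = -∏ l ∈ univ.erase i, (lam l - lam i) := by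
    intro i
    have hfun : (fun x : ℂ => (B - x • 1).det) = fun x => ∏ l, (lam l - x) := funext hlam
    rw [hfun]
    have hd : HasDerivAt (fun x : ℂ => ∏ l, (lam l - x))
        (∑ l, (∏ j ∈ univ.erase l, (lam j - lam i)) • (-1 : ℂ)) (lam i) := by
      apply HasDerivAt.fun_finsetProd
      intro l _
      simpa using (hasDerivAt_id (lam i)).const_sub (lam l)
    rw [hd.deriv, Finset.sum_eq_single i]
    · simp [smul_eq_mul]
    · intro l _ hl
      have h0 : (∏ j ∈ univ.erase l, (lam j - lam i)) = 0 :=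
        Finset.prod_eq_zero (Finset.mem_erase.mpr ⟨Ne.symm hl, mem_univ i⟩) (sub_self _)
      rw [h0, zero_smul]
    · intro h; exact absurd (mem_univ i) h
  -- conclude
  ext i k
  rw [Matrix.mul_apply]
  have hQP : ∑ j, Q i j * P j k
      = c i * c k * (adjugate (B - lam i • 1) * adjugate (B - lam k • 1) :
          Matrix (Fin (m+2)) (Fin (m+2)) ℂ) L L := by
    rw [Matrix.mul_apply, Finset.mul_sum]
    exact Finset.sum_congr rfl fun j _ => by rw [hQ, hP]; ring
  rw [hQP, hFG i (lam k)]
  by_cases hik : i = k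
  · subst hik
    rw [Matrix.diagonal_apply_eq]
    have hcc : c i * c i = 1 := by
      rw [hc]
      show ((-1 : ℂ)) ^ ((i : ℕ) + (m+1)) * (-1) ^ ((i : ℕ) + (m+1)) = 1
      rw [← pow_add, ← two_mul, pow_mul, neg_one_sq, one_pow]
    rw [hcc, one_mul]
    show _ = D i
    simp only [D]
    rw [hderiv i, neg_neg]
    ring
  · rw [Matrix.diagonal_apply_ne _ hik]
    have h0 : (∏ l ∈ univ.erase i, (lam l - lam k)) = 0 :=
      Finset.prod_eq_zero (Finset.mem_erase.mpr ⟨Ne.symm hik, mem_univ k⟩) (sub_self _)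
    rw [h0, mul_zero, mul_zero]
end
end

section
/- Let m ≥ 1, let B be an m×m complex matrix, let χ(x) = det(B − x·Id_m), and let λ ∈ ℂ be an eigenvalue of B, i.e. χ(λ) = 0. Then the square of the adjugate matrix of B − λ·Id_m satisfies adjugate(B − λ·Id_m)² = −χ′(λ) · adjugate(B − λ·Id_m), where χ′ is the derivative of the polynomial χ. -/
open Matrix Polynomial

noncomputable section

namespace Stmt1Aux

lemma divX_map {R S : Type*} [Semiring R] [Semiring S] (f : R →+* S) (p : R[X]) :
    (p.map f).divX = p.divX.map f := by
  ext n
  simp [coeff_divX, coeff_map]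

lemma eval_charpoly {n : ℕ} {R : Type*} [CommRing R] (M : Matrix (Fin n) (Fin n) R) (r : R) :
    M.charpoly.eval r = (r • (1 : Matrix (Fin n) (Fin n) R) - M).det := by
  rw [Matrix.charpoly, _root_.eval_det, matPolyEquiv_charmatrix]
  simp only [eval_sub, eval_X, eval_C, Matrix.scalar_apply, Matrix.smul_one_eq_diagonal]

lemma map_aeval {n : ℕ} {R S : Type*} [CommRing R] [CommRing S] (f : R →+* S)
    (M : Matrix (Fin n) (Fin n) R) (p : R[X]) :
    (Polynomial.aeval M p).map f = Polynomial.aeval (M.map f) (p.map f) := by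
  rw [Polynomial.aeval_def, Polynomial.aeval_def, ← RingHom.mapMatrix_apply,
    Polynomial.hom_eval₂, Polynomial.eval₂_map]
  congr 1
  ext r i j
  simp [Matrix.algebraMap_eq_diagonal, Pi.algebraMap_apply, Matrix.diagonal, Matrix.map_apply,
    Matrix.of_apply, apply_ite f]

lemma adjugate_eq_of_det_ne_zero {n : ℕ} {R : Type*} [CommRing R] [IsDomain R]
    (A : Matrix (Fin (n+1)) (Fin (n+1)) R) (h : A.det ≠ 0) :
    adjugate A = ((-1 : R) ^ n) • Polynomial.aeval A A.charpoly.divX := by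
  have hc0 : A.charpoly.coeff 0 = (-1 : R) ^ (n+1) * A.det := by
    have := Matrix.det_eq_sign_charpoly_coeff A
    rw [Fintype.card_fin] at this
    have h2 : ((-1 : R)) ^ ((n+1)+(n+1)) = 1 := by
      rw [← two_mul]; exact Even.neg_one_pow ⟨n+1, by ring⟩
    rw [this, ← mul_assoc, ← pow_add, h2, one_mul]
  have key : A * adjugate A = A * (((-1 : R) ^ n) • Polynomial.aeval A A.charpoly.divX) := by
    rw [Matrix.mul_adjugate, Matrix.mul_smul]
    have hA : A = Polynomial.aeval A (X : R[X]) := by simp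
    have : A * Polynomial.aeval A A.charpoly.divX
        = Polynomial.aeval A ((X : R[X]) * A.charpoly.divX) := by
      rw [_root_.map_mul, Polynomial.aeval_X]
    rw [this]
    have hXd : (X : R[X]) * A.charpoly.divX = A.charpoly - C (A.charpoly.coeff 0) := by
      rw [eq_sub_iff_add_eq, Polynomial.X_mul_divX_add]
    rw [hXd, map_sub, Matrix.aeval_self_charpoly, Polynomial.aeval_C, zero_sub, hc0,
      Algebra.algebraMap_eq_smul_one]
    rw [← neg_smul, smul_smul]
    congr 1
    have h2 : ((-1 : R)) ^ (n + (n + 1)) = -1 := by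
      rw [show n + (n+1) = 2*n+1 by ring, pow_succ, pow_mul]
      simp
    rw [mul_neg, ← mul_assoc, ← pow_add, h2]; ring
  -- cancel A on the left
  have h2 := congrArg (fun M => adjugate A * M) key
  simp only [← Matrix.mul_assoc, Matrix.adjugate_mul, Matrix.smul_mul, Matrix.one_mul] at h2
  have hreg : IsSMulRegular R A.det := fun x y hxy => mul_left_cancel₀ h hxy
  exact hreg.matrix h2

lemma adjugate_eq {n : ℕ} (A : Matrix (Fin (n+1)) (Fin (n+1)) ℂ) :
    adjugate A = ((-1 : ℂ) ^ n) • Polynomial.aeval A A.charpoly.divX := by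
  let A' := mvPolynomialX (Fin (n+1)) (Fin (n+1)) ℤ
  have hA' : adjugate A' = ((-1 : MvPolynomial (Fin (n+1) × Fin (n+1)) ℤ) ^ n) •
      Polynomial.aeval A' A'.charpoly.divX :=
    adjugate_eq_of_det_ne_zero A' (det_mvPolynomialX_ne_zero _ ℤ)
  let φ := MvPolynomial.aeval (R := ℤ) (fun p : (Fin (n+1)) × (Fin (n+1)) => A p.1 p.2)
  have hmap : A'.map φ = A := by
    rw [← AlgHom.mapMatrix_apply, mvPolynomialX_mapMatrix_aeval]
  calc adjugate A = adjugate (A'.map φ) := by rw [hmap]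
    _ = (adjugate A').map φ := by
        have := RingHom.map_adjugate (φ : MvPolynomial (Fin (n+1) × Fin (n+1)) ℤ →+* ℂ) A'
        simpa [RingHom.mapMatrix_apply] using this.symm
    _ = _ := by
        rw [hA']
        have h1 : (((-1 : MvPolynomial (Fin (n+1) × Fin (n+1)) ℤ) ^ n •
              Polynomial.aeval A' A'.charpoly.divX).map ⇑φ)
            = ((-1 : ℂ) ^ n) • (Polynomial.aeval A' A'.charpoly.divX).map ⇑φ := by
          ext i j
          simp [Matrix.map_apply]
        rw [h1]
        congr 1
        have h2 := map_aeval (φ : MvPolynomial (Fin (n+1) × Fin (n+1)) ℤ →+* ℂ) A'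
          A'.charpoly.divX
        simp only [RingHom.coe_coe] at h2
        rw [h2, ← divX_map, ← Matrix.charpoly_map, RingHom.coe_coe, hmap]

end Stmt1Aux

open Stmt1Aux in
/-- if `λ` is an eigenvalue of the `m × m` matrix `B` (with `m = k+1 ≥ 1`)
and `χ(x) = det(B − x·Id)`, then `adjugate(B − λ·Id)² = −χ′(λ)·adjugate(B − λ·Id)`. -/
theorem stmt1 (k : ℕ) (B : Matrix (Fin (k+1)) (Fin (k+1)) ℂ) (lam : ℂ)
    (hlam : (B - lam • (1 : Matrix (Fin (k+1)) (Fin (k+1)) ℂ)).det = 0) :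
    (B - lam • 1).adjugate * (B - lam • 1).adjugate =
      (-(deriv (fun x : ℂ =>
          (B - x • (1 : Matrix (Fin (k+1)) (Fin (k+1)) ℂ)).det) lam)) •
        (B - lam • 1).adjugate := by
  set A : Matrix (Fin (k+1)) (Fin (k+1)) ℂ := B - lam • 1 with hA
  set c : Polynomial ℂ := A.charpoly with hc
  set d : Polynomial ℂ := c.divX with hd
  set P : Matrix (Fin (k+1)) (Fin (k+1)) ℂ := Polynomial.aeval A d with hPdef
  have hc0 : c.coeff 0 = 0 := by
    have h := Matrix.det_eq_sign_charpoly_coeff A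
    rw [Fintype.card_fin, hlam] at h
    rcases mul_eq_zero.mp h.symm with h' | h'
    · exact absurd h' (pow_ne_zero _ (neg_ne_zero.mpr one_ne_zero))
    · exact h'
  have hXd : (Polynomial.X : Polynomial ℂ) * d = c := by
    have := Polynomial.X_mul_divX_add c
    rwa [hc0, map_zero, add_zero] at this
  have key : adjugate A = ((-1 : ℂ) ^ k) • P := adjugate_eq A
  have hP : P = ((-1 : ℂ) ^ k) • adjugate A := by
    rw [key, smul_smul, ← pow_add, Even.neg_one_pow ⟨k, by ring⟩, one_smul]
  have hac : Polynomial.aeval A c = 0 := Matrix.aeval_self_charpoly A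
  have hPP : P * P = d.coeff 0 • P := by
    have hdsplit : d = Polynomial.X * d.divX + Polynomial.C (d.coeff 0) :=
      (Polynomial.X_mul_divX_add d).symm
    have hdd : d * d = d.divX * c + Polynomial.C (d.coeff 0) * d := by
      calc d * d = (Polynomial.X * d.divX + Polynomial.C (d.coeff 0)) * d := by rw [← hdsplit]
        _ = d.divX * (Polynomial.X * d) + Polynomial.C (d.coeff 0) * d := by ring
        _ = _ := by rw [hXd]
    calc P * P = Polynomial.aeval A (d * d) := (_root_.map_mul _ _ _).symm
      _ = Polynomial.aeval A d.divX * Polynomial.aeval A c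
            + Polynomial.aeval A (Polynomial.C (d.coeff 0)) * P := by
          rw [hdd, map_add, _root_.map_mul, _root_.map_mul]
      _ = d.coeff 0 • P := by
          rw [hac, mul_zero, zero_add, Polynomial.aeval_C, Algebra.algebraMap_eq_smul_one,
            Matrix.smul_mul, Matrix.one_mul]
  -- compute the derivative
  have hf : (fun x : ℂ => (B - x • (1 : Matrix (Fin (k+1)) (Fin (k+1)) ℂ)).det)
      = fun x : ℂ => (-1 : ℂ) ^ (k+1) * c.eval (x - lam) := by
    funext x
    have hmat : B - x • (1 : Matrix (Fin (k+1)) (Fin (k+1)) ℂ)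
        = -((x - lam) • (1 : Matrix (Fin (k+1)) (Fin (k+1)) ℂ) - A) := by
      rw [hA, sub_smul]
      abel
    rw [hmat, Matrix.det_neg, Fintype.card_fin, Stmt1Aux.eval_charpoly]
  have hsub : HasDerivAt (fun x : ℂ => x - lam) 1 lam := (hasDerivAt_id lam).sub_const lam
  have h1 : HasDerivAt (fun x : ℂ => c.eval (x - lam))
      (c.derivative.eval (lam - lam) * 1) lam :=
    HasDerivAt.comp (h := fun x : ℂ => x - lam) lam (c.hasDerivAt (lam - lam)) hsub
  have hder : HasDerivAt (fun x : ℂ => (-1 : ℂ) ^ (k+1) * c.eval (x - lam))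
      ((-1 : ℂ) ^ (k+1) * (c.derivative.eval (lam - lam) * 1)) lam := h1.const_mul _
  have hderiv : deriv (fun x : ℂ =>
      (B - x • (1 : Matrix (Fin (k+1)) (Fin (k+1)) ℂ)).det) lam
      = (-1 : ℂ) ^ (k+1) * d.coeff 0 := by
    rw [hf, hder.deriv, sub_self, mul_one]
    congr 1
    rw [← Polynomial.coeff_zero_eq_eval_zero, Polynomial.coeff_derivative, hd,
      Polynomial.coeff_divX]
    push_cast
    ring
  have hL : A.adjugate * A.adjugate = (d.coeff 0 * (-1 : ℂ) ^ k) • A.adjugate := by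
    calc A.adjugate * A.adjugate = ((-1:ℂ)^k • P) * ((-1:ℂ)^k • P) := by rw [← key]
      _ = ((-1:ℂ)^k * (-1:ℂ)^k) • (P * P) := by
          rw [Matrix.smul_mul, Matrix.mul_smul, smul_smul]
      _ = P * P := by rw [← pow_add, Even.neg_one_pow ⟨k, by ring⟩, one_smul]
      _ = d.coeff 0 • P := hPP
      _ = (d.coeff 0 * (-1:ℂ)^k) • A.adjugate := by rw [hP, smul_smul]
  rw [hderiv, hL]
  congr 1
  rw [pow_succ]
  ring
end
end

section
/- Let n ≥ 2, let μ_1,…,μ_{n-1}, a_1,…,a_{n-1}, b_1,…,b_{n-1} ∈ ℂ and c ∈ ℂ, and let M be the n×n arrowhead matrix with M_{ii} = μ_i for 1 ≤ i ≤ n−1, M_{in} = a_i and M_{ni} = b_i for 1 ≤ i ≤ n−1, M_{nn} = c, and all other entries zero. Then for every x ∈ ℂ, det(x·Id_n + M) = (x + c)·∏_{i=1}^{n-1}(x + μ_i) − Σ_{k=1}^{n-1} b_k·a_k·∏_{l=1, l≠k}^{n-1}(x + μ_l). -/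
open Matrix Finset

noncomputable section

/-- The `(m+2) × (m+2)` arrowhead matrix with diagonal data `μ`, last column `a`,
last row `b`, and corner entry `c`. -/
def arrowhead (m : ℕ) (μ a b : Fin (m+1) → ℂ) (c : ℂ) :
    Matrix (Fin (m+2)) (Fin (m+2)) ℂ := fun i j =>
  if hi : i = Fin.last (m+1) then
    if hj : j = Fin.last (m+1) then c else b (j.castPred hj)
  else
    if hj : j = Fin.last (m+1) then a (i.castPred hi)
    else if i = j then μ (i.castPred hi) else 0

lemma key_fromBlocks (m : ℕ) (d a b : Fin (m+1) → ℂ) (e : ℂ) (hd : ∀ i, d i ≠ 0) :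
    (Matrix.fromBlocks (diagonal d) (Matrix.of fun i (_ : Fin 1) => a i)
      (Matrix.of fun (_ : Fin 1) j => b j) (Matrix.of fun _ _ => e)).det
      = e * ∏ i, d i - ∑ k, b k * a k * ∏ l ∈ Finset.univ.erase k, d l := by
  haveI : Invertible d := ⟨fun i => (d i)⁻¹, by funext i; simp [inv_mul_cancel₀ (hd i)],
    by funext i; simp [mul_inv_cancel₀ (hd i)]⟩
  haveI : Invertible (diagonal d) := diagonalInvertible d
  rw [det_fromBlocks₁₁]
  rw [invOf_diagonal_eq, det_diagonal, det_fin_one]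
  have hinv : ⅟d = fun i => (d i)⁻¹ := by
    exact invOf_eq_right_inv (by funext i; simp [mul_inv_cancel₀ (hd i)])
  simp only [Matrix.sub_apply, Matrix.mul_apply, diagonal_apply, hinv, of_apply, ite_mul, zero_mul,
    Finset.sum_ite_eq', mem_univ, if_true]
  rw [mul_sub, Finset.mul_sum]
  congr 1
  · ring
  · refine Finset.sum_congr rfl fun k _ => ?_
    have : (∏ i, d i) = d k * ∏ l ∈ univ.erase k, d l :=
      (Finset.mul_prod_erase _ _ (mem_univ k)).symm
    rw [this]
    simp only [mul_ite, mul_zero, Finset.sum_ite_eq', mem_univ, if_true]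
    field_simp [hd k]

lemma arrowhead_submatrix (m : ℕ) (μ a b : Fin (m+1) → ℂ) (c x : ℂ) :
    ((x • (1 : Matrix (Fin (m+2)) (Fin (m+2)) ℂ) + arrowhead m μ a b c).submatrix
        (finSumFinEquiv : Fin (m+1) ⊕ Fin 1 ≃ _) (finSumFinEquiv : Fin (m+1) ⊕ Fin 1 ≃ _)) =
      Matrix.fromBlocks (diagonal (fun i => x + μ i)) (Matrix.of fun i (_ : Fin 1) => a i)
        (Matrix.of fun (_ : Fin 1) j => b j) (Matrix.of fun _ _ => x + c) := by
  have hcast : ∀ i : Fin (m+1), (Fin.castAdd 1 i : Fin (m+2)) ≠ Fin.last (m+1) := by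
    intro i h
    exact absurd (congrArg Fin.val h) (Nat.ne_of_lt i.isLt)
  have hlast : (Fin.natAdd (m+1) (0 : Fin 1) : Fin (m+2)) = Fin.last (m+1) := by
    ext; simp
  ext i j
  rcases i with i | i <;> rcases j with j | j
  · simp [arrowhead, Matrix.one_apply, hcast, diagonal_apply]
    rcases eq_or_ne i j with h | h
    · subst h
      rw [if_pos rfl, if_pos rfl, if_pos rfl]
      exact congrArg (x + μ ·) (Fin.ext (by simp))
    · rw [if_neg h, if_neg h, if_neg h, add_zero]
  · simp [arrowhead, Matrix.one_apply, hcast, hlast, Fin.eq_zero j]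
    exact congrArg a (Fin.ext (by simp))
  · simp [arrowhead, Matrix.one_apply, hcast, hlast, Fin.eq_zero i]
    rw [if_neg (fun h => hcast j h.symm), zero_add]
    exact congrArg b (Fin.ext (by simp))
  · simp [arrowhead, Matrix.one_apply, hlast, Fin.eq_zero i, Fin.eq_zero j]

lemma stmt2_generic (m : ℕ) (μ a b : Fin (m+1) → ℂ) (c : ℂ) (x : ℂ)
    (hx : ∀ i, x + μ i ≠ 0) :
    (x • (1 : Matrix (Fin (m+2)) (Fin (m+2)) ℂ) + arrowhead m μ a b c).det =
      (x + c) * ∏ i, (x + μ i)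
        - ∑ k, b k * a k * ∏ l ∈ Finset.univ.erase k, (x + μ l) := by
  rw [← Matrix.det_submatrix_equiv_self (finSumFinEquiv : Fin (m+1) ⊕ Fin 1 ≃ _),
    arrowhead_submatrix, key_fromBlocks m _ a b (x + c) hx]

open Polynomial in
/-- determinant expansion of `x·Id + M` for an arrowhead matrix `M`. -/
theorem stmt2 (m : ℕ) (μ a b : Fin (m+1) → ℂ) (c : ℂ) (x : ℂ) :
    (x • (1 : Matrix (Fin (m+2)) (Fin (m+2)) ℂ) + arrowhead m μ a b c).det =
      (x + c) * ∏ i, (x + μ i)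
        - ∑ k, b k * a k * ∏ l ∈ Finset.univ.erase k, (x + μ l) := by
  set Mp : Matrix (Fin (m+2)) (Fin (m+2)) ℂ[X] :=
    (X : ℂ[X]) • (1 : Matrix (Fin (m+2)) (Fin (m+2)) ℂ[X]) + (arrowhead m μ a b c).map C with hMp
  set P : ℂ[X] := Mp.det with hP
  set Q : ℂ[X] := (X + C c) * ∏ i, (X + C (μ i))
      - ∑ k, C (b k * a k) * ∏ l ∈ Finset.univ.erase k, (X + C (μ l)) with hQ
  have evalP : ∀ y : ℂ, P.eval y =
      (y • (1 : Matrix (Fin (m+2)) (Fin (m+2)) ℂ) + arrowhead m μ a b c).det := by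
    intro y
    have : P.eval y = (Mp.map (evalRingHom y)).det :=
      RingHom.map_det (evalRingHom y) Mp
    rw [this]
    congr 1
    ext i j
    simp [hMp, Matrix.map_apply, Matrix.one_apply, Matrix.smul_apply, Matrix.add_apply]
    split <;> simp
  have evalQ : ∀ y : ℂ, Q.eval y =
      (y + c) * ∏ i, (y + μ i)
        - ∑ k, b k * a k * ∏ l ∈ Finset.univ.erase k, (y + μ l) := by
    intro y
    simp [hQ, eval_prod, eval_finset_sum]
  have hPQ : P = Q := by
    have hfin : {y : ℂ | ¬ ∀ i, y + μ i ≠ 0}.Finite := by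
      apply Set.Finite.subset (Set.finite_range fun i => -μ i)
      intro y hy
      simp only [Set.mem_setOf_eq, not_forall, not_not] at hy
      obtain ⟨i, hi⟩ := hy
      exact ⟨i, by linear_combination -hi⟩
    have hinf : {y : ℂ | (P - Q).IsRoot y}.Infinite := by
      apply Set.Infinite.mono (s := {y : ℂ | ∀ i, y + μ i ≠ 0})
      · intro y hy
        simp only [Set.mem_setOf_eq, IsRoot, eval_sub]
        rw [evalP, evalQ, stmt2_generic m μ a b c y hy, sub_self]
      · rw [show {y : ℂ | ∀ i, y + μ i ≠ 0} = {y : ℂ | ¬ ∀ i, y + μ i ≠ 0}ᶜ by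
          ext y; simp only [Set.mem_compl_iff, Set.mem_setOf_eq, not_not]]
        exact hfin.infinite_compl
    have := Polynomial.eq_zero_of_infinite_isRoot _ hinf
    exact sub_eq_zero.mp this
  have := congrArg (Polynomial.eval x) hPQ
  rw [evalP, evalQ] at this
  exact this
end
end

section
/- Let n ≥ 2 and let A be the n×n arrowhead matrix with diagonal entries λ^(n-1)_1,…,λ^(n-1)_{n-1}, last column a_1,…,a_{n-1}, last row b_1,…,b_{n-1}, and corner entry a_nn. Let λ^(n)_1,…,λ^(n)_n ∈ ℂ be a listing of the eigenvalues of A with multiplicity, i.e. det(A − x·Id_n) = ∏_{i=1}^{n}(λ^(n)_i − x) for all x. Let m be a positive integer and 1 ≤ j ≤ n, and assume m − (λ^(n)_j − λ^(n-1)_k)/(2πi) ≠ 0 for every 1 ≤ k ≤ n−1. Then ∏_{i=1}^{n}( m − (λ^(n)_j − λ^(n)_i)/(2πi) ) / ∏_{i=1}^{n-1}( m − (λ^(n)_j − λ^(n-1)_i)/(2πi) ) = m − λ^(n)_j/(2πi) + a_nn/(2πi) − Σ_{k=1}^{n-1} ( b_k/(2πi) ) · ( 1 / ( m − (λ^(n)_j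 − λ^(n-1)_k)/(2πi) ) ) · ( a_k/(2πi) ). -/
open Matrix Finset

noncomputable section

/-- `2πi` as a complex number. -/
def twoPiI : ℂ := 2 * (Real.pi : ℂ) * Complex.I

lemma arrowhead_sub (m : ℕ) (μ a b : Fin (m+1) → ℂ) (c x : ℂ) :
    arrowhead m μ a b c - x • (1 : Matrix (Fin (m+2)) (Fin (m+2)) ℂ)
      = arrowhead m (fun k => μ k - x) a b (c - x) := by
  ext i j
  simp only [arrowhead, Matrix.sub_apply, Matrix.smul_apply, Matrix.one_apply]
  split_ifs with h1 h2 h3 <;> simp_all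

lemma arrowhead_eq (m : ℕ) (μ a b : Fin (m+1) → ℂ) (c : ℂ) :
    arrowhead m μ a b c =
      ((Matrix.fromBlocks (Matrix.diagonal μ)
        (Matrix.of fun i (_ : Fin 1) => a i)
        (Matrix.of fun (_ : Fin 1) j => b j)
        (Matrix.of fun (_ : Fin 1) (_ : Fin 1) => c)).submatrix
        finSumFinEquiv.symm finSumFinEquiv.symm) := by
  have hcs : ∀ i : Fin (m+1), i.castSucc ≠ Fin.last (m+1) :=
    fun i => (Fin.castSucc_lt_last i).ne
  have hs : ∀ i : Fin (m+1), finSumFinEquiv.symm (i.castSucc : Fin (m+2)) = Sum.inl i := by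
    intro i
    have : (i.castSucc : Fin (m+2)) = Fin.castAdd 1 i := rfl
    rw [this, finSumFinEquiv_symm_apply_castAdd]
  have hl : finSumFinEquiv.symm (Fin.last (m+1)) = Sum.inr 0 := by
    have : (Fin.last (m+1)) = Fin.natAdd (m+1) (0 : Fin 1) := by ext; simp
    rw [this, finSumFinEquiv_symm_apply_natAdd]
  ext i j
  induction i using Fin.lastCases with
  | last =>
    induction j using Fin.lastCases with
    | last => simp [arrowhead, Matrix.submatrix_apply, hl]
    | cast j => simp [arrowhead, Matrix.submatrix_apply, hl, hs, hcs]
  | cast i =>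
    induction j using Fin.lastCases with
    | last => simp [arrowhead, Matrix.submatrix_apply, hl, hs, hcs]
    | cast j =>
      simp only [arrowhead, Matrix.submatrix_apply, hl, hs, hcs, dif_neg,
        Matrix.fromBlocks_apply₁₁, Matrix.diagonal_apply]
      by_cases h : i = j <;> simp [h, Fin.castSucc_inj, hcs]

lemma det_arrowhead (m : ℕ) (μ a b : Fin (m+1) → ℂ) (c : ℂ) (hμ : ∀ k, μ k ≠ 0) :
    (arrowhead m μ a b c).det
      = (∏ k, μ k) * (c - ∑ k, b k * (μ k)⁻¹ * a k) := by
  rw [arrowhead_eq, Matrix.det_submatrix_equiv_self]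
  have hdet : IsUnit (Matrix.diagonal μ).det := by
    rw [Matrix.det_diagonal]
    exact (Finset.prod_ne_zero_iff.2 fun k _ => hμ k).isUnit
  have : Invertible (Matrix.diagonal μ) := ((Matrix.isUnit_iff_isUnit_det _).2 hdet).invertible
  rw [Matrix.det_fromBlocks₁₁, Matrix.det_diagonal]
  congr 1
  rw [Matrix.det_fin_one]
  have hinv : (⅟(Matrix.diagonal μ) : Matrix _ _ ℂ) = Matrix.diagonal (fun k => (μ k)⁻¹) := by
    apply invOf_eq_right_inv
    rw [Matrix.diagonal_mul_diagonal]
    rw [show (fun k => μ k * (μ k)⁻¹) = fun _ => (1:ℂ) from funext fun k => mul_inv_cancel₀ (hμ k)]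
    exact Matrix.diagonal_one
  rw [hinv]
  simp only [Matrix.sub_apply, Matrix.mul_apply, Matrix.of_apply,
    Matrix.diagonal_apply, Finset.sum_ite_eq, Finset.mem_univ, if_true]
  congr 1
  refine Finset.sum_congr rfl fun k _ => ?_
  simp [Finset.sum_ite_eq', Matrix.diagonal_apply]

/-- the rational identity (Lemma `ciq`) for an arrowhead matrix. -/
theorem stmt3 (m : ℕ) (lam' a b : Fin (m+1) → ℂ) (ann : ℂ)
    (lamn : Fin (m+2) → ℂ)
    (hlamn : ∀ x : ℂ,
      (arrowhead m lam' a b ann - x • (1 : Matrix (Fin (m+2)) (Fin (m+2)) ℂ)).det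
        = ∏ i, (lamn i - x))
    (M : ℕ) (hM : 0 < M) (j : Fin (m+2))
    (hne : ∀ k : Fin (m+1), (M : ℂ) - (lamn j - lam' k) / twoPiI ≠ 0) :
    (∏ i, ((M : ℂ) - (lamn j - lamn i) / twoPiI)) /
      (∏ i, ((M : ℂ) - (lamn j - lam' i) / twoPiI)) =
    (M : ℂ) - lamn j / twoPiI + ann / twoPiI
      - ∑ k, (b k / twoPiI) * (1 / ((M : ℂ) - (lamn j - lam' k) / twoPiI)) *
          (a k / twoPiI) := by
  have hT : twoPiI ≠ 0 := by
    simp only [twoPiI]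
    exact mul_ne_zero (mul_ne_zero two_ne_zero
      (Complex.ofReal_ne_zero.2 Real.pi_ne_zero)) Complex.I_ne_zero
  set T := twoPiI with hTdef
  set t : ℂ := lamn j - T * M with ht
  have hQ : ∀ k, lam' k - t = T * ((M : ℂ) - (lamn j - lam' k) / T) := by
    intro k
    field_simp [ht]
    ring
  have hQne : ∀ k, lam' k - t ≠ 0 := fun k => by
    rw [hQ k]; exact mul_ne_zero hT (hne k)
  have hdet := hlamn t
  rw [arrowhead_sub, det_arrowhead m (fun k => lam' k - t) a b (ann - t) hQne] at hdet
  have hP : ∏ i, (lamn i - t) = T ^ (m+2) * ∏ i, ((M : ℂ) - (lamn j - lamn i) / T) := by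
    calc ∏ i, (lamn i - t) = ∏ i, T * ((M : ℂ) - (lamn j - lamn i) / T) :=
          Finset.prod_congr rfl fun i _ => by field_simp [ht]; ring
      _ = _ := by
          rw [Finset.prod_mul_distrib, Finset.prod_const, Finset.card_univ, Fintype.card_fin]
  have hQprod : ∏ k, (lam' k - t) = T ^ (m+1) * ∏ k, ((M : ℂ) - (lamn j - lam' k) / T) := by
    calc ∏ k, (lam' k - t) = ∏ k, T * ((M : ℂ) - (lamn j - lam' k) / T) :=
          Finset.prod_congr rfl fun k _ => hQ k
      _ = _ := by
          rw [Finset.prod_mul_distrib, Finset.prod_const, Finset.card_univ, Fintype.card_fin]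
  have hQprodne : (∏ k, ((M : ℂ) - (lamn j - lam' k) / T)) ≠ 0 :=
    Finset.prod_ne_zero_iff.2 fun k _ => hne k
  set R : ℂ := (M : ℂ) - lamn j / T + ann / T
      - ∑ k, (b k / T) * (1 / ((M : ℂ) - (lamn j - lam' k) / T)) * (a k / T) with hRdef
  have hS : ann - t - ∑ k, b k * (lam' k - t)⁻¹ * a k = T * R := by
    have hsum : ∑ k, b k * (lam' k - t)⁻¹ * a k
        = T * ∑ k, (b k / T) * (1 / ((M : ℂ) - (lamn j - lam' k) / T)) * (a k / T) := by
      rw [Finset.mul_sum]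
      refine Finset.sum_congr rfl fun k _ => ?_
      rw [hQ k, mul_inv]
      have h1 : T * T⁻¹ = 1 := mul_inv_cancel₀ hT
      simp only [div_eq_mul_inv, one_div]
      linear_combination (-(b k * a k * T⁻¹ *
        ((M : ℂ) - (lamn j - lam' k) * T⁻¹)⁻¹)) * h1
    rw [hRdef, hsum, ht]
    field_simp
    ring
  have key : ∏ i, ((M : ℂ) - (lamn j - lamn i) / T)
      = (∏ k, ((M : ℂ) - (lamn j - lam' k) / T)) * R := by
    have h2 : T ^ (m+2) * ∏ i, ((M : ℂ) - (lamn j - lamn i) / T)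
        = T ^ (m+2) * ((∏ k, ((M : ℂ) - (lamn j - lam' k) / T)) * R) := by
      rw [← hP, ← hdet, hQprod, hS]
      ring
    exact mul_left_cancel₀ (pow_ne_zero _ hT) h2
  rw [key, mul_comm, mul_div_assoc, div_self hQprodne, mul_one]
end
end

section
/- Let n ≥ 2 and let A be the n×n arrowhead matrix with diagonal entries λ^(n-1)_1,…,λ^(n-1)_{n-1}, last column a_1,…,a_{n-1}, last row b_1,…,b_{n-1}, and corner entry a_nn. Assume the λ^(n-1)_i are pairwise distinct, and let λ^(n)_1,…,λ^(n)_n be a listing of the eigenvalues of A with multiplicity, i.e. det(A − x·Id_n) = ∏_{i=1}^{n}(λ^(n)_i − x) for all x. Then for every 1 ≤ k ≤ n−1, b_k · a_k = − ∏_{l=1}^{n}(λ^(n)_l − λ^(n-1)_k) / ∏_{l=1, l≠k}^{n-1}(λ^(n-1)_l − λ^(n-1)_k). -/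
open Matrix Finset

noncomputable section

/-- the product `b_k·a_k` in terms of the eigenvalues of an
arrowhead matrix with pairwise distinct diagonal entries. -/
theorem stmt4 (m : ℕ) (lam' a b : Fin (m+1) → ℂ) (ann : ℂ)
    (hdist : Function.Injective lam')
    (lamn : Fin (m+2) → ℂ)
    (hlamn : ∀ x : ℂ,
      (arrowhead m lam' a b ann - x • (1 : Matrix (Fin (m+2)) (Fin (m+2)) ℂ)).det
        = ∏ i, (lamn i - x))
    (k : Fin (m+1)) :
    b k * a k =
      -(∏ l, (lamn l - lam' k)) / ∏ l ∈ Finset.univ.erase k, (lam' l - lam' k) := by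
  set M : Matrix (Fin (m+2)) (Fin (m+2)) ℂ :=
    arrowhead m lam' a b ann - lam' k • (1 : Matrix (Fin (m+2)) (Fin (m+2)) ℂ) with hM
  have hklast : (k.castSucc : Fin (m+2)) ≠ Fin.last (m+1) := (Fin.castSucc_lt_last k).ne
  set N : Matrix (Fin (m+1)) (Fin (m+1)) ℂ :=
    M.submatrix (Fin.succAbove k.castSucc) Fin.castSucc with hN
  have hinner : N.submatrix (Fin.castSucc : Fin m → Fin (m+1)) k.succAbove
      = Matrix.diagonal (fun i => lam' (k.succAbove i) - lam' k) := by
    ext i j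
    simp only [hN, hM, Matrix.submatrix_apply, Fin.castSucc_succAbove_castSucc,
      Matrix.sub_apply, Matrix.smul_apply, Matrix.one_apply, arrowhead,
      dif_neg (Fin.castSucc_lt_last _).ne, Fin.castPred_castSucc,
      Fin.castSucc_inj, Fin.succAbove_right_inj, Matrix.diagonal, Matrix.of_apply]
    rcases eq_or_ne i j with rfl | hij
    · simp [smul_eq_mul]
    · simp [hij]
  have hNdet : N.det = (-1 : ℂ) ^ ((m : ℕ) + (k : ℕ)) * b k *
      ∏ i : Fin m, (lam' (k.succAbove i) - lam' k) := by
    rw [Matrix.det_succ_column N k, Finset.sum_eq_single (Fin.last m)]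
    · have hrow : (k.castSucc).succAbove (Fin.last m) = Fin.last (m+1) := by
        rw [Fin.succAbove_of_le_castSucc, Fin.succ_last]
        exact Fin.castSucc_le_castSucc_iff.mpr (Fin.le_last k)
      have hNlk : N (Fin.last m) k = b k := by
        simp only [hN, hM, Matrix.submatrix_apply, hrow, Matrix.sub_apply, Matrix.smul_apply,
          Matrix.one_apply, arrowhead, dif_pos rfl, dif_neg hklast, Fin.castPred_castSucc]
        simp [hklast.symm]
      have hsub : N.submatrix (Fin.last m).succAbove k.succAbove
          = N.submatrix (Fin.castSucc : Fin m → Fin (m+1)) k.succAbove := by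
        rw [Fin.succAbove_last]
      rw [hNlk, hsub, hinner, Matrix.det_diagonal]
      simp [Fin.val_last]
    · intro i _ hi
      have hNik : N i k = 0 := by
        have hrne : (k.castSucc).succAbove i ≠ k.castSucc := Fin.succAbove_ne _ _
        have hrnelast : (k.castSucc).succAbove i ≠ Fin.last (m+1) := by
          intro h
          rcases Fin.lt_or_le i.castSucc k.castSucc with hlt | hle
          · rw [Fin.succAbove_of_castSucc_lt _ _ hlt] at h
            exact (Fin.castSucc_lt_last i).ne h
          · rw [Fin.succAbove_of_le_castSucc _ _ hle, ← Fin.succ_last] at h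
            exact hi (Fin.succ_injective _ h)
        simp only [hN, hM, Matrix.submatrix_apply, Matrix.sub_apply, Matrix.smul_apply,
          Matrix.one_apply, arrowhead, dif_neg hrnelast, dif_neg hklast]
        simp [hrne]
      rw [hNik]; ring
    · intro h; exact absurd (Finset.mem_univ _) h
  have hMdet : M.det = -(b k * a k) * ∏ i : Fin m, (lam' (k.succAbove i) - lam' k) := by
    rw [Matrix.det_succ_row M k.castSucc, Finset.sum_eq_single (Fin.last (m+1))]
    · have hMkl : M k.castSucc (Fin.last (m+1)) = a k := by
        simp only [hM, Matrix.sub_apply, Matrix.smul_apply, Matrix.one_apply, arrowhead,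
          dif_neg hklast, dif_pos rfl, Fin.castPred_castSucc]
        simp [hklast]
      have hsub : M.submatrix (k.castSucc).succAbove (Fin.last (m+1)).succAbove = N := by
        rw [Fin.succAbove_last]
      rw [hMkl, hsub, hNdet]
      have : ((k.castSucc : Fin (m+2)) : ℕ) = (k : ℕ) := rfl
      rw [this, Fin.val_last]
      rw [show ((-1 : ℂ)) ^ ((k : ℕ) + (m + 1)) * a k *
          ((-1) ^ ((m : ℕ) + (k : ℕ)) * b k * ∏ i : Fin m, (lam' (k.succAbove i) - lam' k))
          = ((-1 : ℂ) ^ ((k : ℕ) + (m + 1) + ((m : ℕ) + (k : ℕ)))) *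
            (a k * b k * ∏ i : Fin m, (lam' (k.succAbove i) - lam' k)) by
        rw [pow_add]; ring]
      have hodd : Odd ((k : ℕ) + (m + 1) + ((m : ℕ) + (k : ℕ))) := by
        refine ⟨(k : ℕ) + m, by ring⟩
      rw [hodd.neg_one_pow]; ring
    · intro j _ hj
      have hMkj : M k.castSucc j = 0 := by
        simp only [hM, Matrix.sub_apply, Matrix.smul_apply, Matrix.one_apply, arrowhead,
          dif_neg hklast, dif_neg hj, Fin.castPred_castSucc]
        rcases eq_or_ne k.castSucc j with rfl | hne
        · simp
        · simp [hne]
      rw [hMkj]; ring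
    · intro h; exact absurd (Finset.mem_univ _) h
  have hprod : ∏ i : Fin m, (lam' (k.succAbove i) - lam' k)
      = ∏ l ∈ Finset.univ.erase k, (lam' l - lam' k) := by
    rw [← Finset.compl_singleton, ← Fin.image_succAbove_univ,
      Finset.prod_image (fun x _ y _ h => Fin.succAbove_right_injective h)]
  have hP : (∏ l ∈ Finset.univ.erase k, (lam' l - lam' k)) ≠ 0 := by
    rw [Finset.prod_ne_zero_iff]
    intro l hl
    exact sub_ne_zero_of_ne (fun h => (Finset.mem_erase.mp hl).1 (hdist h))
  have key : ∏ i, (lamn i - lam' k)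
      = -(b k * a k) * ∏ l ∈ Finset.univ.erase k, (lam' l - lam' k) := by
    rw [← hlamn (lam' k), ← hM, hMdet, hprod]
  field_simp
  linear_combination key
end
end

section
/- Let n ≥ 2 and let A be an n×n complex matrix with upper-left (n−1)×(n−1) submatrix A^(n-1). Define δ_{n-1}(A) to be the n×n matrix that agrees with A in all entries (i,j) with 1 ≤ i,j ≤ n−1 and in the entry (n,n), and has zero entries (i,n) and (n,i) for 1 ≤ i ≤ n−1. Let E_n be the n×n matrix unit with 1 in position (n,n). Assume that for every pair of eigenvalues μ, ν of A^(n-1) and every nonzero integer m, μ − ν ≠ 2πi·m. Then there exists a unique sequence of matrices h_0, h_1, h_2, … ∈ M_n(ℂ) with h_0 = Id_n such that for every m ≥ 0: [h_{m+1}, i·E_n] = ( m·Id_n − (1/(2πi))·A ) · h_m + h_m · (1/(2πi))·δ_{n-1}(A). (These h_m are the coefficients of the unique formal fundamental solution F̂(z) = (Id + h_1 z^{-1} + h_2 z^{-2} + ⋯) z^{−δ_{n-1}(A)/(2πi)} e^{i E_n z} of the system dF/dz = (i E_n − A/(2πi z)) F.) -/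
open Matrix

noncomputable section

/-- `δ_{n-1}(A)`: agrees with `A` on the upper-left `(n−1) × (n−1)` block and the
`(n,n)` entry, zero on the remaining entries of the last row and column. -/
def deltaN (m : ℕ) (A : Matrix (Fin (m+2)) (Fin (m+2)) ℂ) :
    Matrix (Fin (m+2)) (Fin (m+2)) ℂ := fun i j =>
  if (i = Fin.last (m+1) ∧ j = Fin.last (m+1)) ∨
      (i ≠ Fin.last (m+1) ∧ j ≠ Fin.last (m+1)) then A i j else 0

namespace Stmt8A

open Polynomial

lemma charpoly_eval_eq {k : ℕ} (B : Matrix (Fin k) (Fin k) ℂ) (a : ℂ) :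
    (Matrix.charpoly B).eval a = (a • (1 : Matrix (Fin k) (Fin k) ℂ) - B).det := by
  rw [Matrix.charpoly, _root_.eval_det, matPolyEquiv_charmatrix]
  simp [smul_one_eq_diagonal]

lemma mem_spectrum_of_root {k : ℕ} (B : Matrix (Fin k) (Fin k) ℂ) {a : ℂ}
    (h : (Matrix.charpoly B).IsRoot a) : a ∈ spectrum ℂ B := by
  rw [spectrum.mem_iff, Algebra.algebraMap_eq_smul_one]
  intro hu
  rw [Matrix.isUnit_iff_isUnit_det] at hu
  rw [IsRoot.def, charpoly_eval_eq] at h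
  rw [h] at hu
  exact not_isUnit_zero hu

lemma mem_spectrum_of_not_isUnit {k : ℕ} (B : Matrix (Fin k) (Fin k) ℂ) {x : ℂ}
    (h : ¬ IsUnit (B - x • (1 : Matrix (Fin k) (Fin k) ℂ))) : x ∈ spectrum ℂ B := by
  rw [spectrum.mem_iff, Algebra.algebraMap_eq_smul_one]
  intro hu
  exact h (by simpa using hu.neg)

lemma sylvester_inj {k : ℕ} (B : Matrix (Fin k) (Fin k) ℂ) (c : ℂ)
    (hc : ∀ μ ∈ spectrum ℂ B, ∀ ν ∈ spectrum ℂ B, μ - ν ≠ c)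
    (P : Matrix (Fin k) (Fin k) ℂ)
    (hP : c • P - B * P + P * B = 0) : P = 0 := by
  set C : Matrix (Fin k) (Fin k) ℂ := B - c • 1 with hC
  have key : P * B = C * P := by
    have h1 : -(c • P - B * P) = P * B := add_eq_zero_iff_neg_eq.mp hP
    rw [← h1, hC]
    simp [neg_sub, sub_mul, smul_mul_assoc]
  have powkey : ∀ n : ℕ, P * B ^ n = C ^ n * P := by
    intro n; induction n with
    | zero => simp
    | succ n ih => rw [pow_succ, pow_succ, ← Matrix.mul_assoc, ih, Matrix.mul_assoc, key,
        ← Matrix.mul_assoc]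
  have polykey : ∀ q : ℂ[X], P * aeval B q = aeval C q * P := by
    intro q
    induction q using Polynomial.induction_on' with
    | add p q hp hq => simp [mul_add, add_mul, hp, hq]
    | monomial n a =>
      simp only [aeval_monomial, Algebra.algebraMap_eq_smul_one]
      rw [smul_one_mul, smul_one_mul, mul_smul_comm, smul_mul_assoc, powkey]
  have hCH : aeval B (Matrix.charpoly B) = 0 := Matrix.aeval_self_charpoly B
  have h0 : aeval C (Matrix.charpoly B) * P = 0 := by rw [← polykey, hCH, Matrix.mul_zero]
  set g := Matrix.charpoly B with hg
  have hmon : g.Monic := Matrix.charpoly_monic B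
  have hsplit : g.Splits := IsAlgClosed.splits g
  have hfact : g = (g.roots.map fun a => X - Polynomial.C a).prod :=
    (prod_multiset_X_sub_C_of_monic_of_roots_card_eq hmon
      (by rw [← splits_iff_card_roots]; exact hsplit)).symm
  have hunit : IsUnit (aeval C g) := by
    have hrw : aeval C g = ((g.roots.map fun a => X - Polynomial.C a).toList.map (aeval C)).prod := by
      conv_lhs => rw [hfact]
      rw [← Multiset.prod_toList, map_list_prod (aeval C)]
    rw [hrw]
    apply List.prod_isUnit
    intro x hx
    simp only [List.mem_map, Multiset.mem_toList, Multiset.mem_map] at hx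
    obtain ⟨q, ⟨a, ha, rfl⟩, rfl⟩ := hx
    have haroot : g.IsRoot a := by
      rw [← Polynomial.mem_roots hmon.ne_zero]; exact ha
    have haspec : a ∈ spectrum ℂ B := mem_spectrum_of_root B haroot
    have heval : aeval C (X - Polynomial.C a) = B - (c + a) • (1 : Matrix (Fin k) (Fin k) ℂ) := by
      simp only [map_sub, aeval_X, aeval_C, Algebra.algebraMap_eq_smul_one, hC]
      rw [add_smul]
      abel
    rw [heval]
    by_contra hnu
    have := mem_spectrum_of_not_isUnit B hnu
    exact hc _ this _ haspec (by ring)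
  obtain ⟨u, hu⟩ := hunit
  calc P = (↑(u⁻¹) : Matrix (Fin k) (Fin k) ℂ) * (↑u * P) := by
        rw [← Matrix.mul_assoc, Units.inv_mul, Matrix.one_mul]
  _ = 0 := by rw [hu, h0, Matrix.mul_zero]

lemma twoPiI_ne_zero : twoPiI ≠ 0 := by
  simp [twoPiI, Complex.I_ne_zero, Complex.ofReal_ne_zero, Real.pi_ne_zero]

variable (m : ℕ) (A : Matrix (Fin (m+2)) (Fin (m+2)) ℂ)

lemma deltaN_cs_cs (a b : Fin (m+1)) :
    deltaN m A a.castSucc b.castSucc = A a.castSucc b.castSucc :=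
  if_pos (Or.inr ⟨(Fin.castSucc_lt_last a).ne, (Fin.castSucc_lt_last b).ne⟩)

lemma deltaN_last_last :
    deltaN m A (Fin.last (m+1)) (Fin.last (m+1)) = A (Fin.last (m+1)) (Fin.last (m+1)) :=
  if_pos (Or.inl ⟨rfl, rfl⟩)

lemma deltaN_cs_last (a : Fin (m+1)) : deltaN m A a.castSucc (Fin.last (m+1)) = 0 :=
  if_neg (by simp [(Fin.castSucc_lt_last a).ne])

lemma deltaN_last_cs (b : Fin (m+1)) : deltaN m A (Fin.last (m+1)) b.castSucc = 0 :=
  if_neg (by simp [(Fin.castSucc_lt_last b).ne])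

def A11 : Matrix (Fin (m+1)) (Fin (m+1)) ℂ := A.submatrix Fin.castSucc Fin.castSucc

def Slin (c : ℂ) : Matrix (Fin (m+1)) (Fin (m+1)) ℂ →ₗ[ℂ] Matrix (Fin (m+1)) (Fin (m+1)) ℂ :=
  c • LinearMap.id - LinearMap.mulLeft ℂ (A11 m A) + LinearMap.mulRight ℂ (A11 m A)

lemma Slin_apply (c : ℂ) (P : Matrix (Fin (m+1)) (Fin (m+1)) ℂ) :
    Slin m A c P = c • P - A11 m A * P + P * A11 m A := rfl

variable {m A} in
lemma Slin_inj
    (hres : ∀ μ ∈ spectrum ℂ (A.submatrix Fin.castSucc Fin.castSucc),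
      ∀ ν ∈ spectrum ℂ (A.submatrix Fin.castSucc Fin.castSucc),
      ∀ k : ℤ, k ≠ 0 → μ - ν ≠ twoPiI * (k : ℂ)) (N : ℕ) :
    Function.Injective (Slin m A (twoPiI * ((N : ℂ) + 1))) := by
  rw [injective_iff_map_eq_zero]
  intro P hP
  apply sylvester_inj (A11 m A) (twoPiI * ((N : ℂ) + 1))
  · intro μ hμ ν hν
    have := hres μ hμ ν hν (N + 1) (by omega)
    rw [show (((N : ℤ) + 1 : ℤ) : ℂ) = (N : ℂ) + 1 by push_cast; ring] at this
    exact this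
  · rw [← Slin_apply]; exact hP

variable {m A} in
lemma Slin_surj
    (hres : ∀ μ ∈ spectrum ℂ (A.submatrix Fin.castSucc Fin.castSucc),
      ∀ ν ∈ spectrum ℂ (A.submatrix Fin.castSucc Fin.castSucc),
      ∀ k : ℤ, k ≠ 0 → μ - ν ≠ twoPiI * (k : ℂ)) (N : ℕ) :
    Function.Surjective (Slin m A (twoPiI * ((N : ℂ) + 1))) :=
  LinearMap.injective_iff_surjective.mp (Slin_inj hres N)

/-- the right-hand side of the recursion -/
def Rfun (M : ℕ) (X : Matrix (Fin (m+2)) (Fin (m+2)) ℂ) : Matrix (Fin (m+2)) (Fin (m+2)) ℂ :=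
  ((M : ℂ) • (1 : Matrix (Fin (m+2)) (Fin (m+2)) ℂ) - (1 / twoPiI) • A) * X
    + X * ((1 / twoPiI) • deltaN m A)

lemma Rfun_apply (M : ℕ) (X : Matrix (Fin (m+2)) (Fin (m+2)) ℂ) (i j : Fin (m+2)) :
    Rfun m A M X i j = (M : ℂ) * X i j - (1 / twoPiI) * ∑ k, A i k * X k j
      + (1 / twoPiI) * ∑ k, X i k * deltaN m A k j := by
  simp only [Rfun, Matrix.add_apply, Matrix.mul_apply, Matrix.sub_apply, Matrix.smul_apply,
    Matrix.one_apply, smul_eq_mul, sub_mul, ite_mul, one_mul, zero_mul, mul_ite, mul_zero,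
    mul_one]
  rw [Finset.sum_ite_eq, if_pos (Finset.mem_univ i),
    Finset.mul_sum, Finset.mul_sum]
  congr 1
  · congr 1
    apply Finset.sum_congr rfl; intro k _; ring
  · apply Finset.sum_congr rfl; intro k _; ring

lemma Rfun_sub (M : ℕ) (X Y : Matrix (Fin (m+2)) (Fin (m+2)) ℂ) :
    Rfun m A M (X - Y) = Rfun m A M X - Rfun m A M Y := by
  simp only [Rfun, Matrix.mul_sub, Matrix.sub_mul]
  abel

lemma comm_apply (Y : Matrix (Fin (m+2)) (Fin (m+2)) ℂ) (i j : Fin (m+2)) :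
    (Y * (Complex.I • Matrix.single (Fin.last (m+1)) (Fin.last (m+1)) (1 : ℂ))
      - (Complex.I • Matrix.single (Fin.last (m+1)) (Fin.last (m+1)) (1 : ℂ)) * Y) i j
    = (if j = Fin.last (m+1) then Complex.I * Y i (Fin.last (m+1)) else 0)
      - (if i = Fin.last (m+1) then Complex.I * Y (Fin.last (m+1)) j else 0) := by
  have h1 : (Y * Matrix.single (Fin.last (m+1)) (Fin.last (m+1)) (1 : ℂ)) i j
      = if j = Fin.last (m+1) then Y i (Fin.last (m+1)) else 0 := by
    by_cases hj : j = Fin.last (m+1)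
    · subst hj; simp [Matrix.mul_single_apply_same]
    · simp [Matrix.mul_single_apply_of_ne, hj]
  have h2 : (Matrix.single (Fin.last (m+1)) (Fin.last (m+1)) (1 : ℂ) * Y) i j
      = if i = Fin.last (m+1) then Y (Fin.last (m+1)) j else 0 := by
    by_cases hi : i = Fin.last (m+1)
    · subst hi; simp [Matrix.single_mul_apply_same]
    · simp [Matrix.single_mul_apply_of_ne, hi]
  rw [mul_smul_comm, smul_mul_assoc]
  simp only [Matrix.sub_apply, Matrix.smul_apply, smul_eq_mul, h1, h2, mul_ite, mul_zero]

/-- target for the Sylvester solve at step `M` -/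
def Gt (M : ℕ) (X : Matrix (Fin (m+2)) (Fin (m+2)) ℂ) :
    Matrix (Fin (m+1)) (Fin (m+1)) ℂ := fun a b =>
  A a.castSucc (Fin.last (m+1)) * (Complex.I * Rfun m A M X (Fin.last (m+1)) b.castSucc)

def Pmat (M : ℕ) (X : Matrix (Fin (m+2)) (Fin (m+2)) ℂ) :
    Matrix (Fin (m+1)) (Fin (m+1)) ℂ :=
  Function.invFun (Slin m A (twoPiI * ((M : ℂ) + 1))) (Gt m A M X)

variable {m A} in
lemma Pmat_spec
    (hres : ∀ μ ∈ spectrum ℂ (A.submatrix Fin.castSucc Fin.castSucc),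
      ∀ ν ∈ spectrum ℂ (A.submatrix Fin.castSucc Fin.castSucc),
      ∀ k : ℤ, k ≠ 0 → μ - ν ≠ twoPiI * (k : ℂ)) (M : ℕ)
    (X : Matrix (Fin (m+2)) (Fin (m+2)) ℂ) :
    Slin m A (twoPiI * ((M : ℂ) + 1)) (Pmat m A M X) = Gt m A M X :=
  Function.invFun_eq (Slin_surj hres M (Gt m A M X))

/-- one step of the recursion -/
def step (M : ℕ) (X : Matrix (Fin (m+2)) (Fin (m+2)) ℂ) :
    Matrix (Fin (m+2)) (Fin (m+2)) ℂ := fun i j =>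
  if hi : i = Fin.last (m+1) then
    (if j = Fin.last (m+1) then
      (∑ k : Fin (m+1), (1/twoPiI) *
        (A (Fin.last (m+1)) k.castSucc * (-Complex.I * Rfun m A M X k.castSucc (Fin.last (m+1)))))
        / ((M : ℂ) + 1)
    else Complex.I * Rfun m A M X (Fin.last (m+1)) j)
  else
    (if hj : j = Fin.last (m+1) then -Complex.I * Rfun m A M X i (Fin.last (m+1))
     else Pmat m A M X (i.castPred hi) (j.castPred hj))

lemma step_last_last (M : ℕ) (X : Matrix (Fin (m+2)) (Fin (m+2)) ℂ) :
    step m A M X (Fin.last (m+1)) (Fin.last (m+1))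
    = (∑ k : Fin (m+1), (1/twoPiI) *
        (A (Fin.last (m+1)) k.castSucc * (-Complex.I * Rfun m A M X k.castSucc (Fin.last (m+1)))))
        / ((M : ℂ) + 1) := by
  simp [step]

lemma step_last_cs (M : ℕ) (X : Matrix (Fin (m+2)) (Fin (m+2)) ℂ) (b : Fin (m+1)) :
    step m A M X (Fin.last (m+1)) b.castSucc
    = Complex.I * Rfun m A M X (Fin.last (m+1)) b.castSucc := by
  simp [step, (Fin.castSucc_lt_last b).ne]

lemma step_cs_last (M : ℕ) (X : Matrix (Fin (m+2)) (Fin (m+2)) ℂ) (a : Fin (m+1)) :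
    step m A M X a.castSucc (Fin.last (m+1))
    = -Complex.I * Rfun m A M X a.castSucc (Fin.last (m+1)) := by
  simp [step, (Fin.castSucc_lt_last a).ne]

lemma step_cs_cs (M : ℕ) (X : Matrix (Fin (m+2)) (Fin (m+2)) ℂ) (a b : Fin (m+1)) :
    step m A M X a.castSucc b.castSucc = Pmat m A M X a b := by
  simp [step, (Fin.castSucc_lt_last a).ne, (Fin.castSucc_lt_last b).ne]

/-- solvability condition -/
def Compat (M : ℕ) (X : Matrix (Fin (m+2)) (Fin (m+2)) ℂ) : Prop :=
  (∀ a b : Fin (m+1), Rfun m A M X a.castSucc b.castSucc = 0) ∧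
    Rfun m A M X (Fin.last (m+1)) (Fin.last (m+1)) = 0

lemma compat_zero : Compat m A 0 1 := by
  constructor
  · intro a b
    rw [Rfun_apply]
    simp only [Nat.cast_zero, zero_mul, Matrix.one_apply, mul_ite, mul_one, mul_zero,
      ite_mul, one_mul, zero_mul]
    rw [Finset.sum_ite_eq', if_pos (Finset.mem_univ _), Finset.sum_ite_eq,
      if_pos (Finset.mem_univ _), deltaN_cs_cs]
    split <;> ring
  · rw [Rfun_apply]
    simp only [Nat.cast_zero, zero_mul, Matrix.one_apply, mul_ite, mul_one, mul_zero,
      ite_mul, one_mul, zero_mul]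
    rw [Finset.sum_ite_eq', if_pos (Finset.mem_univ _), Finset.sum_ite_eq,
      if_pos (Finset.mem_univ _), deltaN_last_last]
    split <;> ring

variable {m A} in
lemma compat_step
    (hres : ∀ μ ∈ spectrum ℂ (A.submatrix Fin.castSucc Fin.castSucc),
      ∀ ν ∈ spectrum ℂ (A.submatrix Fin.castSucc Fin.castSucc),
      ∀ k : ℤ, k ≠ 0 → μ - ν ≠ twoPiI * (k : ℂ)) (M : ℕ)
    (X : Matrix (Fin (m+2)) (Fin (m+2)) ℂ) :
    Compat m A (M+1) (step m A M X) := by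
  have ht := twoPiI_ne_zero
  constructor
  · intro a b
    have hs := congrFun (congrFun (congrArg (fun Z => (Z : Matrix (Fin (m+1)) (Fin (m+1)) ℂ))
      (Pmat_spec hres M X)) a) b
    rw [Slin_apply] at hs
    simp only [Matrix.add_apply, Matrix.sub_apply, Matrix.smul_apply, smul_eq_mul,
      Matrix.mul_apply, A11, Matrix.submatrix_apply, Gt] at hs
    rw [Rfun_apply,
      Fin.sum_univ_castSucc (f := fun k => A a.castSucc k * step m A M X k b.castSucc),
      Fin.sum_univ_castSucc (f := fun k => step m A M X a.castSucc k * deltaN m A k b.castSucc)]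
    simp only [step_cs_cs, step_last_cs, step_cs_last, deltaN_cs_cs, deltaN_cs_last,
      deltaN_last_cs, Nat.cast_succ, mul_zero, add_zero]
    field_simp
    linear_combination hs
  · rw [Rfun_apply,
      Fin.sum_univ_castSucc
        (f := fun k => A (Fin.last (m+1)) k * step m A M X k (Fin.last (m+1))),
      Fin.sum_univ_castSucc
        (f := fun k => step m A M X (Fin.last (m+1)) k * deltaN m A k (Fin.last (m+1)))]
    simp only [step_last_last, step_cs_last, step_last_cs, deltaN_cs_last, deltaN_last_last,
      Nat.cast_succ, mul_zero, zero_mul, zero_add, ← Finset.mul_sum]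
    have hM : ((M : ℂ) + 1) ≠ 0 := Nat.cast_add_one_ne_zero M
    field_simp
    simp only [mul_comm (A _ _) Complex.I, Finset.sum_const_zero]
    ring

variable {m A} in
lemma eqn_step (M : ℕ) (X : Matrix (Fin (m+2)) (Fin (m+2)) ℂ) (hc : Compat m A M X) :
    step m A M X * (Complex.I •
        Matrix.single (Fin.last (m+1)) (Fin.last (m+1)) (1 : ℂ))
      - (Complex.I •
        Matrix.single (Fin.last (m+1)) (Fin.last (m+1)) (1 : ℂ)) * step m A M X
    = Rfun m A M X := by
  funext i j
  rw [comm_apply]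
  by_cases hi : i = Fin.last (m+1) <;> by_cases hj : j = Fin.last (m+1)
  · subst hi; subst hj
    simp only [if_pos rfl]
    rw [sub_self]
    exact hc.2.symm
  · subst hi
    obtain ⟨b, rfl⟩ := Fin.exists_castSucc_eq.mpr hj
    simp only [if_pos rfl, if_neg hj, step_last_cs, if_true]
    rw [zero_sub]
    have : Complex.I * Complex.I = -1 := Complex.I_mul_I
    linear_combination (-Rfun m A M X (Fin.last (m+1)) b.castSucc) * this
  · subst hj
    obtain ⟨a, rfl⟩ := Fin.exists_castSucc_eq.mpr hi
    simp only [if_pos rfl, if_neg hi, step_cs_last, if_true]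
    rw [sub_zero]
    have : Complex.I * Complex.I = -1 := Complex.I_mul_I
    linear_combination (-Rfun m A M X a.castSucc (Fin.last (m+1))) * this
  · obtain ⟨a, rfl⟩ := Fin.exists_castSucc_eq.mpr hi
    obtain ⟨b, rfl⟩ := Fin.exists_castSucc_eq.mpr hj
    simp only [if_neg hi, if_neg hj]
    rw [sub_zero]
    exact (hc.1 a b).symm

/-- the sequence of coefficients -/
def hseq : ℕ → Matrix (Fin (m+2)) (Fin (m+2)) ℂ
  | 0 => 1
  | (M+1) => step m A M (hseq M)

variable {m A} in
lemma compat_hseq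
    (hres : ∀ μ ∈ spectrum ℂ (A.submatrix Fin.castSucc Fin.castSucc),
      ∀ ν ∈ spectrum ℂ (A.submatrix Fin.castSucc Fin.castSucc),
      ∀ k : ℤ, k ≠ 0 → μ - ν ≠ twoPiI * (k : ℂ)) :
    ∀ M, Compat m A M (hseq m A M)
  | 0 => compat_zero m A
  | (M+1) => compat_step hres M (hseq m A M)

variable {m A} in
lemma diff_zero
    (hres : ∀ μ ∈ spectrum ℂ (A.submatrix Fin.castSucc Fin.castSucc),
      ∀ ν ∈ spectrum ℂ (A.submatrix Fin.castSucc Fin.castSucc),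
      ∀ k : ℤ, k ≠ 0 → μ - ν ≠ twoPiI * (k : ℂ)) (M : ℕ)
    (Δ : Matrix (Fin (m+2)) (Fin (m+2)) ℂ)
    (hoffr : ∀ a : Fin (m+1), Δ a.castSucc (Fin.last (m+1)) = 0)
    (hoffc : ∀ b : Fin (m+1), Δ (Fin.last (m+1)) b.castSucc = 0)
    (hdiag : ∀ a b : Fin (m+1), Rfun m A (M+1) Δ a.castSucc b.castSucc = 0)
    (hll : Rfun m A (M+1) Δ (Fin.last (m+1)) (Fin.last (m+1)) = 0) :
    Δ = 0 := by
  have ht := twoPiI_ne_zero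
  set P : Matrix (Fin (m+1)) (Fin (m+1)) ℂ := fun a b => Δ a.castSucc b.castSucc with hPdef
  have hP : Slin m A (twoPiI * ((M : ℂ) + 1)) P = 0 := by
    funext a b
    have h := hdiag a b
    rw [Rfun_apply,
      Fin.sum_univ_castSucc (f := fun k => A a.castSucc k * Δ k b.castSucc),
      Fin.sum_univ_castSucc (f := fun k => Δ a.castSucc k * deltaN m A k b.castSucc)] at h
    simp only [hoffr, hoffc, deltaN_cs_cs, deltaN_cs_last, mul_zero, zero_mul, add_zero,
      Nat.cast_succ] at h
    rw [Slin_apply]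
    simp only [Matrix.add_apply, Matrix.sub_apply, Matrix.smul_apply, smul_eq_mul,
      Matrix.mul_apply, A11, Matrix.submatrix_apply, Matrix.zero_apply, hPdef]
    show (twoPiI * ((M : ℂ) + 1)) * Δ a.castSucc b.castSucc
        - (∑ x : Fin (m+1), A a.castSucc x.castSucc * Δ x.castSucc b.castSucc)
        + (∑ x : Fin (m+1), Δ a.castSucc x.castSucc * A x.castSucc b.castSucc) = 0
    field_simp at h
    linear_combination h
  have hP0 : P = 0 := by
    apply Slin_inj hres M
    rw [hP, map_zero]
  have hll0 : Δ (Fin.last (m+1)) (Fin.last (m+1)) = 0 := by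
    have h := hll
    rw [Rfun_apply,
      Fin.sum_univ_castSucc
        (f := fun k => A (Fin.last (m+1)) k * Δ k (Fin.last (m+1))),
      Fin.sum_univ_castSucc
        (f := fun k => Δ (Fin.last (m+1)) k * deltaN m A k (Fin.last (m+1)))] at h
    simp only [hoffr, hoffc, deltaN_cs_last, deltaN_last_last, mul_zero, zero_mul, add_zero,
      zero_add, Finset.sum_const_zero, Nat.cast_succ] at h
    have hM : ((M : ℂ) + 1) ≠ 0 := Nat.cast_add_one_ne_zero M
    have h2 : ((M : ℂ) + 1) * Δ (Fin.last (m+1)) (Fin.last (m+1)) = 0 := by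
      linear_combination h
    exact (mul_eq_zero.mp h2).resolve_left hM
  funext i j
  by_cases hi : i = Fin.last (m+1) <;> by_cases hj : j = Fin.last (m+1)
  · subst hi; subst hj; simpa using hll0
  · subst hi
    obtain ⟨b, rfl⟩ := Fin.exists_castSucc_eq.mpr hj
    simpa using hoffc b
  · subst hj
    obtain ⟨a, rfl⟩ := Fin.exists_castSucc_eq.mpr hi
    simpa using hoffr a
  · obtain ⟨a, rfl⟩ := Fin.exists_castSucc_eq.mpr hi
    obtain ⟨b, rfl⟩ := Fin.exists_castSucc_eq.mpr hj
    have := congrFun (congrFun hP0 a) b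
    simpa [hPdef] using this

end Stmt8A

/-- existence and uniqueness of the coefficients `h_m` of the formal
fundamental solution, under the nonresonance condition that no two eigenvalues of
`A^(n-1)` differ by a nonzero integer multiple of `2πi`. -/


theorem stmt8 (m : ℕ) (A : Matrix (Fin (m+2)) (Fin (m+2)) ℂ)
    (hres : ∀ μ ∈ spectrum ℂ (A.submatrix Fin.castSucc Fin.castSucc),
      ∀ ν ∈ spectrum ℂ (A.submatrix Fin.castSucc Fin.castSucc),
      ∀ k : ℤ, k ≠ 0 → μ - ν ≠ twoPiI * (k : ℂ)) :
    ∃! h : ℕ → Matrix (Fin (m+2)) (Fin (m+2)) ℂ,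
      h 0 = 1 ∧
      ∀ M : ℕ,
        h (M+1) * (Complex.I •
            Matrix.single (Fin.last (m+1)) (Fin.last (m+1)) (1 : ℂ))
          - (Complex.I •
            Matrix.single (Fin.last (m+1)) (Fin.last (m+1)) (1 : ℂ)) * h (M+1)
        = ((M : ℂ) • (1 : Matrix (Fin (m+2)) (Fin (m+2)) ℂ)
            - (1 / twoPiI) • A) * h M
          + h M * ((1 / twoPiI) • deltaN m A) := by
  classical
  have hIi : Complex.I * Complex.I = -1 := Complex.I_mul_I
  refine ⟨Stmt8A.hseq m A, ⟨rfl, fun M => ?_⟩, ?_⟩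
  · exact Stmt8A.eqn_step M (Stmt8A.hseq m A M) (Stmt8A.compat_hseq hres M)
  · rintro g ⟨hg0, hgeq⟩
    funext M
    induction M with
    | zero => rw [hg0]; rfl
    | succ M ih =>
      have hstep : Stmt8A.hseq m A (M+1) = Stmt8A.step m A M (Stmt8A.hseq m A M) := rfl
      have key : g (M+1) - Stmt8A.hseq m A (M+1) = 0 := by
        apply Stmt8A.diff_zero hres M
        · intro a
          have e1 : (g (M+1) * (Complex.I •
                Matrix.single (Fin.last (m+1)) (Fin.last (m+1)) (1 : ℂ))
              - (Complex.I •
                Matrix.single (Fin.last (m+1)) (Fin.last (m+1)) (1 : ℂ)) * g (M+1))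
                a.castSucc (Fin.last (m+1))
              = Stmt8A.Rfun m A M (g M) a.castSucc (Fin.last (m+1)) :=
            congrFun (congrFun (hgeq M) a.castSucc) (Fin.last (m+1))
          rw [Stmt8A.comm_apply] at e1
          simp only [if_pos rfl, if_true, if_neg (Fin.castSucc_lt_last a).ne, sub_zero] at e1
          rw [Matrix.sub_apply, hstep, Stmt8A.step_cs_last, ← ih]
          linear_combination (-Complex.I) * e1
            + (g (M+1) a.castSucc (Fin.last (m+1))) * hIi
        · intro b
          have e2 : (g (M+1) * (Complex.I •
                Matrix.single (Fin.last (m+1)) (Fin.last (m+1)) (1 : ℂ))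
              - (Complex.I •
                Matrix.single (Fin.last (m+1)) (Fin.last (m+1)) (1 : ℂ)) * g (M+1))
                (Fin.last (m+1)) b.castSucc
              = Stmt8A.Rfun m A M (g M) (Fin.last (m+1)) b.castSucc :=
            congrFun (congrFun (hgeq M) (Fin.last (m+1))) b.castSucc
          rw [Stmt8A.comm_apply] at e2
          simp only [if_pos rfl, if_true, if_neg (Fin.castSucc_lt_last b).ne, zero_sub] at e2
          rw [Matrix.sub_apply, hstep, Stmt8A.step_last_cs, ← ih]
          linear_combination Complex.I * e2
            + (g (M+1) (Fin.last (m+1)) b.castSucc) * hIi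
        · intro a b
          have e3 : (g (M+2) * (Complex.I •
                Matrix.single (Fin.last (m+1)) (Fin.last (m+1)) (1 : ℂ))
              - (Complex.I •
                Matrix.single (Fin.last (m+1)) (Fin.last (m+1)) (1 : ℂ)) * g (M+2))
                a.castSucc b.castSucc
              = Stmt8A.Rfun m A (M+1) (g (M+1)) a.castSucc b.castSucc :=
            congrFun (congrFun (hgeq (M+1)) a.castSucc) b.castSucc
          rw [Stmt8A.comm_apply] at e3
          simp only [if_neg (Fin.castSucc_lt_last a).ne, if_neg (Fin.castSucc_lt_last b).ne,
            sub_zero] at e3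
          rw [Stmt8A.Rfun_sub, Matrix.sub_apply, ← e3,
            (Stmt8A.compat_hseq hres (M+1)).1 a b, sub_zero]
        · have e4 : (g (M+2) * (Complex.I •
                Matrix.single (Fin.last (m+1)) (Fin.last (m+1)) (1 : ℂ))
              - (Complex.I •
                Matrix.single (Fin.last (m+1)) (Fin.last (m+1)) (1 : ℂ)) * g (M+2))
                (Fin.last (m+1)) (Fin.last (m+1))
              = Stmt8A.Rfun m A (M+1) (g (M+1)) (Fin.last (m+1)) (Fin.last (m+1)) :=
            congrFun (congrFun (hgeq (M+1)) (Fin.last (m+1))) (Fin.last (m+1))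
          rw [Stmt8A.comm_apply] at e4
          simp only [if_pos rfl, if_true, sub_self] at e4
          rw [Stmt8A.Rfun_sub, Matrix.sub_apply, ← e4,
            (Stmt8A.compat_hseq hres (M+1)).2, sub_zero]
      have := sub_eq_zero.mp key
      exact this
end
end

section
/- Let n ≥ 2 and let A_{n-1} be the n×n arrowhead matrix with diagonal entries λ^(n-1)_1,…,λ^(n-1)_{n-1} (assumed pairwise distinct), last column a_1,…,a_{n-1} with every a_k ≠ 0, last row b_1,…,b_{n-1}, and corner entry a_nn. Let λ^(n)_1,…,λ^(n)_n satisfy det(A_{n-1} − x·Id) = ∏_i(λ^(n)_i − x), and assume λ^(n-1)_i − λ^(n-1)_k ∉ 2πi·(ℤ∖{0}) for all i,k. Let δ_{n-1}(A_{n-1}) = diag(λ^(n-1)_1,…,λ^(n-1)_{n-1}, a_nn) and let (K_m)_{m≥0} be the unique sequence with K_0 = Id_n and [K_{m+1}, i·E_n] = −(1/(2πi))·A_{n-1}·K_m + K_m·( (1/(2πi))·δ_{n-1}(A_{n-1}) + m·Id ) for all m ≥ 0, where E_n is the matrix unit at (n,n). Then the entries of K_1 are given by: (K_1)_{in} = a_i/(2π)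 for 1 ≤ i ≤ n−1; (K_1)_{nk} = −(2π/a_k)·∏_{l=1}^{n}( (λ^(n)_l − λ^(n-1)_k)/(2πi) ) / ∏_{l=1,l≠k}^{n-1}( (λ^(n-1)_l − λ^(n-1)_k)/(2πi) ) for 1 ≤ k ≤ n−1; and (K_1)_{ik} = −i·(a_i/a_k)·∏_{l=1}^{n}( (λ^(n)_l − λ^(n-1)_k)/(2πi) ) / [ ∏_{l=1,l≠k}^{n-1}( (λ^(n-1)_l − λ^(n-1)_k)/(2πi) ) · ( (λ^(n-1)_i − λ^(n-1)_k)/(2πi) − 1 ) ] for 1 ≤ i ≠ k ≤ n−1. -/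
open Matrix Finset

noncomputable section

lemma prod_erase_succAbove (m : ℕ) (k : Fin (m+1)) (f : Fin (m+1) → ℂ) :
    ∏ l ∈ Finset.univ.erase k, f l = ∏ i : Fin m, f (k.succAbove i) := by
  refine (Finset.prod_bij (fun i _ => k.succAbove i) ?_ ?_ ?_ ?_).symm
  · intro i _; exact Finset.mem_erase.2 ⟨Fin.succAbove_ne k i, Finset.mem_univ _⟩
  · intro i _ j _ h; exact Fin.succAbove_right_injective h
  · intro l hl; exact ⟨(Fin.exists_succAbove_eq (Finset.mem_erase.1 hl).1).choose,
      Finset.mem_univ _, (Fin.exists_succAbove_eq (Finset.mem_erase.1 hl).1).choose_spec⟩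
  · intro i _; rfl

lemma det_arrow (m : ℕ) (lam' a b : Fin (m+1) → ℂ) (ann : ℂ) (k : Fin (m+1)) :
    (arrowhead m lam' a b ann - lam' k • (1 : Matrix (Fin (m+2)) (Fin (m+2)) ℂ)).det
      = -(a k * b k * ∏ l ∈ Finset.univ.erase k, (lam' l - lam' k)) := by
  set B := arrowhead m lam' a b ann - lam' k • (1 : Matrix (Fin (m+2)) (Fin (m+2)) ℂ) with hB
  have hklast : (k.castSucc : Fin (m+2)) ≠ Fin.last (m+1) := (Fin.castSucc_lt_last k).ne
  have hrow : ∀ j : Fin (m+2), j ≠ Fin.last (m+1) → B k.castSucc j = 0 := by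
    intro j hj
    simp only [hB, Matrix.sub_apply, arrowhead, Matrix.smul_apply, Matrix.one_apply]
    rw [dif_neg hklast, dif_neg hj]
    by_cases h : k.castSucc = j
    · subst h; simp
    · simp [h]
  have hrowlast : B k.castSucc (Fin.last (m+1)) = a k := by
    simp [hB, arrowhead, Matrix.sub_apply, Matrix.one_apply, hklast]
  rw [Matrix.det_succ_row B k.castSucc]
  rw [Finset.sum_eq_single (Fin.last (m+1))]
  rotate_left
  · intro j _ hj; rw [hrow j hj]; ring
  · intro h; exact absurd (Finset.mem_univ _) h
  rw [hrowlast]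
  set C := B.submatrix k.castSucc.succAbove (Fin.last (m+1)).succAbove with hC
  have hcol : ∀ i : Fin (m+1), i ≠ Fin.last m → C i k = 0 := by
    intro i hi
    have h1 : k.castSucc.succAbove i ≠ Fin.last (m+1) := by
      intro h
      rcases Fin.lt_or_le i.castSucc k.castSucc with hlt | hle
      · rw [Fin.succAbove_of_castSucc_lt _ _ hlt] at h
        exact absurd h (Fin.castSucc_lt_last i).ne
      · rw [Fin.succAbove_of_le_castSucc _ _ hle] at h
        exact hi (by simpa [Fin.succ_eq_last_succ] using h)
    have h2 : k.castSucc.succAbove i ≠ k.castSucc := Fin.succAbove_ne _ _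
    simp only [hC, Matrix.submatrix_apply, Fin.succAbove_last]
    simp only [hB, Matrix.sub_apply, arrowhead, Matrix.smul_apply, Matrix.one_apply]
    rw [dif_neg h1, dif_neg hklast]
    simp [h2]
  have hcollast : C (Fin.last m) k = b k := by
    have h1 : k.castSucc.succAbove (Fin.last m) = Fin.last (m+1) := by
      rw [Fin.succAbove_of_le_castSucc _ _ (Fin.castSucc_le_castSucc_iff.2 (Fin.le_last k))]
      rfl
    simp only [hC, Matrix.submatrix_apply, Fin.succAbove_last, h1]
    simp [hB, arrowhead, Matrix.sub_apply, Matrix.one_apply, hklast, hklast.symm]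
  rw [Matrix.det_succ_column C k]
  rw [Finset.sum_eq_single (Fin.last m)]
  rotate_left
  · intro i _ hi; rw [hcol i hi]; ring
  · intro h; exact absurd (Finset.mem_univ _) h
  rw [hcollast]
  have hD : C.submatrix (Fin.last m).succAbove k.succAbove
      = Matrix.diagonal (fun i => lam' (k.succAbove i) - lam' k) := by
    ext i j
    have : C.submatrix (Fin.last m).succAbove k.succAbove i j
        = B ((k.succAbove i).castSucc) ((k.succAbove j).castSucc) := by
      simp [hC, Matrix.submatrix_apply, Fin.succAbove_last, Fin.castSucc_succAbove_castSucc]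
    rw [this]
    have hne1 : ((k.succAbove i).castSucc : Fin (m+2)) ≠ Fin.last (m+1) :=
      (Fin.castSucc_lt_last _).ne
    by_cases hij : i = j
    · subst hij
      simp [hB, arrowhead, Matrix.sub_apply, Matrix.one_apply, hne1, Matrix.diagonal_apply_eq]
    · have hne2 : ((k.succAbove i).castSucc : Fin (m+2)) ≠ (k.succAbove j).castSucc := by
        simp only [ne_eq, Fin.castSucc_inj]
        exact fun h => hij (Fin.succAbove_right_injective h)
      have hne1j : ((k.succAbove j).castSucc : Fin (m+2)) ≠ Fin.last (m+1) :=
        (Fin.castSucc_lt_last _).ne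
      simp [hB, arrowhead, Matrix.sub_apply, Matrix.one_apply, hne1, hne1j, hne2,
        Matrix.diagonal_apply_ne _ hij]
  rw [hD, Matrix.det_diagonal, prod_erase_succAbove m k (fun l => lam' l - lam' k)]
  simp only [Fin.coe_castSucc, Fin.val_last]
  have hsign : (-1 : ℂ) ^ ((k : ℕ) + (m + 1)) * ((-1 : ℂ) ^ (m + (k : ℕ))) = -1 := by
    rw [← pow_add]
    have : (k : ℕ) + (m + 1) + (m + (k : ℕ)) = 2 * ((k : ℕ) + m) + 1 := by ring
    rw [this, pow_succ, pow_mul]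
    simp
  linear_combination (a k * b k * ∏ i : Fin m, (lam' (k.succAbove i) - lam' k)) * hsign

lemma frac_aux1 (P Q Tm c ak bk : ℂ) (hak : ak ≠ 0) (hQ : Q ≠ 0) (hc : c ≠ 0)
    (hTm : Tm ≠ 0) (hPb : P = -(ak * bk * Q)) :
    -bk / c = -(c / ak) * (P / (Tm * -c ^ 2)) / (Q / Tm) := by
  have hc2 : Tm * -c ^ 2 ≠ 0 := mul_ne_zero hTm (neg_ne_zero.2 (pow_ne_zero 2 hc))
  have hD : ak * (Tm * -c ^ 2) * Q ≠ 0 := mul_ne_zero (mul_ne_zero hak hc2) hQ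
  conv_rhs => rw [← neg_div, div_mul_div_comm, div_div_eq_mul_div, div_mul_eq_mul_div,
    div_div]
  rw [div_eq_div_iff hc hD, hPb]
  ring

lemma frac_aux2 (P Q Tm t c ai ak bk u v : ℂ) (hak : ak ≠ 0) (hQ : Q ≠ 0) (hc : c ≠ 0)
    (hTm : Tm ≠ 0) (ht : t ≠ 0) (hδ : 1 + (v - u) / t ≠ 0)
    (hPb : P = -(ak * bk * Q)) :
    ai / t * (-bk / c) / (1 + (v - u) / t)
      = -(t / c) * (ai / ak) * (P / (Tm * t ^ 2)) / (Q / Tm * ((u - v) / t - 1)) := by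
  have hδ2 : t + (v - u) ≠ 0 := fun h => hδ (by field_simp; linear_combination h)
  have e1 : 1 + (v - u) / t = (t + (v - u)) / t := by field_simp
  have e2 : (u - v) / t - 1 = -(t + (v - u)) / t := by field_simp; ring
  rw [e1, e2]
  conv_lhs => rw [div_mul_div_comm, div_div_eq_mul_div, div_mul_eq_mul_div, div_div]
  conv_rhs => rw [← neg_div, div_mul_div_comm, div_mul_div_comm, div_mul_div_comm,
    div_div_eq_mul_div, div_mul_eq_mul_div, div_div]
  rw [div_eq_div_iff (mul_ne_zero (mul_ne_zero ht hc) hδ2)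
    (mul_ne_zero (mul_ne_zero (mul_ne_zero hc hak)
      (mul_ne_zero hTm (pow_ne_zero 2 ht)))
      (mul_ne_zero hQ (neg_ne_zero.2 hδ2))), hPb]
  ring

/-- explicit entries of `K_1` in the formal-solution recursion for
the arrowhead system. -/
theorem stmt9 (m : ℕ) (lam' a b : Fin (m+1) → ℂ) (ann : ℂ)
    (hdist : Function.Injective lam')
    (ha : ∀ k, a k ≠ 0)
    (lamn : Fin (m+2) → ℂ)
    (hlamn : ∀ x : ℂ,
      (arrowhead m lam' a b ann - x • (1 : Matrix (Fin (m+2)) (Fin (m+2)) ℂ)).det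
        = ∏ i, (lamn i - x))
    (hres : ∀ (i k : Fin (m+1)) (N : ℤ), N ≠ 0 → lam' i - lam' k ≠ twoPiI * (N : ℂ))
    (K : ℕ → Matrix (Fin (m+2)) (Fin (m+2)) ℂ)
    (hK0 : K 0 = 1)
    (hKrec : ∀ M : ℕ,
      K (M+1) * (Complex.I •
          Matrix.single (Fin.last (m+1)) (Fin.last (m+1)) (1 : ℂ))
        - (Complex.I •
          Matrix.single (Fin.last (m+1)) (Fin.last (m+1)) (1 : ℂ)) * K (M+1)
      = -((1 / twoPiI) • (arrowhead m lam' a b ann * K M))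
        + K M * ((1 / twoPiI) • Matrix.diagonal (Fin.snoc lam' ann)
            + (M : ℂ) • (1 : Matrix (Fin (m+2)) (Fin (m+2)) ℂ))) :
    (∀ i : Fin (m+1),
      K 1 i.castSucc (Fin.last (m+1)) = a i / (2 * (Real.pi : ℂ))) ∧
    (∀ k : Fin (m+1),
      K 1 (Fin.last (m+1)) k.castSucc
        = -((2 * (Real.pi : ℂ)) / a k) *
            (∏ l, ((lamn l - lam' k) / twoPiI)) /
            (∏ l ∈ Finset.univ.erase k, ((lam' l - lam' k) / twoPiI))) ∧
    (∀ i k : Fin (m+1), i ≠ k →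
      K 1 i.castSucc k.castSucc
        = -Complex.I * (a i / a k) *
            (∏ l, ((lamn l - lam' k) / twoPiI)) /
            ((∏ l ∈ Finset.univ.erase k, ((lam' l - lam' k) / twoPiI)) *
              ((lam' i - lam' k) / twoPiI - 1))) := by
  have hpi : (Real.pi : ℂ) ≠ 0 := by exact_mod_cast Real.pi_ne_zero
  have hc : (2 * (Real.pi : ℂ)) ≠ 0 := by simp [hpi]
  have hTc : twoPiI = (2 * (Real.pi : ℂ)) * Complex.I := rfl
  have hT : twoPiI ≠ 0 := by
    rw [hTc]; exact mul_ne_zero hc Complex.I_ne_zero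
  have hT2 : twoPiI ^ 2 = -(2 * (Real.pi : ℂ)) ^ 2 := by
    rw [hTc, mul_pow, Complex.I_sq]; ring
  have h0 := hKrec 0
  rw [hK0] at h0
  -- fact1
  have fact1 : ∀ i : Fin (m+1),
      K 1 i.castSucc (Fin.last (m+1)) * Complex.I = -(1/twoPiI) * a i := by
    intro i
    have h := congrFun (congrFun h0 i.castSucc) (Fin.last (m+1))
    have hne : (i.castSucc : Fin (m+2)) ≠ Fin.last (m+1) := (Fin.castSucc_lt_last i).ne
    simp only [Matrix.sub_apply, Matrix.add_apply, Matrix.neg_apply, Matrix.smul_apply,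
      Matrix.mul_smul, Matrix.smul_mul, Matrix.mul_one, Matrix.one_mul,
      Matrix.mul_single_apply_same,
      Matrix.single_mul_apply_of_ne (h := hne),
      Nat.cast_zero, zero_smul, add_zero, Matrix.diagonal_apply_ne _ hne,
      smul_eq_mul, mul_one, mul_zero, sub_zero] at h
    simp only [arrowhead, dif_neg hne, dif_pos rfl, Fin.castPred_castSucc] at h
    norm_num at h ⊢
    linear_combination h
  -- fact2
  have fact2 : ∀ k : Fin (m+1),
      Complex.I * K 1 (Fin.last (m+1)) k.castSucc = (1/twoPiI) * b k := by
    intro k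
    have hne : (k.castSucc : Fin (m+2)) ≠ Fin.last (m+1) := (Fin.castSucc_lt_last k).ne
    have h := congrFun (congrFun h0 (Fin.last (m+1))) k.castSucc
    simp only [Matrix.sub_apply, Matrix.add_apply, Matrix.neg_apply, Matrix.smul_apply,
      Matrix.mul_smul, Matrix.smul_mul, Matrix.mul_one, Matrix.one_mul,
      Matrix.single_mul_apply_same,
      Matrix.mul_single_apply_of_ne (hbj := hne),
      Nat.cast_zero, zero_smul, add_zero, Matrix.diagonal_apply_ne _ hne.symm,
      smul_eq_mul, mul_one, mul_zero, zero_sub, neg_neg] at h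
    simp only [arrowhead, dif_pos rfl, dif_neg hne, Fin.castPred_castSucc] at h
    norm_num at h ⊢
    linear_combination h
  -- fact3
  have fact3 : ∀ i k : Fin (m+1), i ≠ k →
      K 1 i.castSucc k.castSucc * (1 + (lam' k - lam' i) / twoPiI)
        = (a i / twoPiI) * K 1 (Fin.last (m+1)) k.castSucc := by
    intro i k hik
    have hnei : (i.castSucc : Fin (m+2)) ≠ Fin.last (m+1) := (Fin.castSucc_lt_last i).ne
    have hnek : (k.castSucc : Fin (m+2)) ≠ Fin.last (m+1) := (Fin.castSucc_lt_last k).ne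
    have h := congrFun (congrFun (hKrec 1) i.castSucc) k.castSucc
    have hAK : (arrowhead m lam' a b ann * K 1) i.castSucc k.castSucc
        = lam' i * K 1 i.castSucc k.castSucc
          + a i * K 1 (Fin.last (m+1)) k.castSucc := by
      rw [Matrix.mul_apply, Fin.sum_univ_castSucc]
      have hlast : arrowhead m lam' a b ann i.castSucc (Fin.last (m+1)) = a i := by
        simp [arrowhead, hnei]
      rw [hlast]
      congr 1
      rw [Finset.sum_eq_single i]
      · simp [arrowhead, hnei]
      · intro r _ hr
        have hz : arrowhead m lam' a b ann i.castSucc r.castSucc = 0 := by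
          have : (i.castSucc : Fin (m+2)) ≠ r.castSucc := by
            simp [Fin.castSucc_inj]; exact fun h' => hr h'.symm
          simp [arrowhead, hnei, (Fin.castSucc_lt_last r).ne, this]
        rw [hz, zero_mul]
      · intro h'; exact absurd (Finset.mem_univ _) h'
    simp only [Matrix.sub_apply, Matrix.add_apply, Matrix.smul_apply, Matrix.neg_apply,
      Matrix.mul_smul, Matrix.smul_mul,
      Matrix.mul_single_apply_of_ne (hbj := hnek),
      Matrix.single_mul_apply_of_ne (h := hnei),
      Matrix.mul_add, Matrix.mul_diagonal, Nat.cast_one, one_smul, Matrix.mul_one,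
      Fin.snoc_castSucc, smul_eq_mul, mul_zero, sub_zero] at h
    rw [hAK] at h
    linear_combination -h
  -- the characteristic polynomial relation
  have hPb : ∀ k : Fin (m+1),
      (∏ l, (lamn l - lam' k))
        = -(a k * b k * ∏ l ∈ Finset.univ.erase k, (lam' l - lam' k)) := by
    intro k
    rw [← hlamn (lam' k)]
    exact det_arrow m lam' a b ann k
  have hQ : ∀ k : Fin (m+1), (∏ l ∈ Finset.univ.erase k, (lam' l - lam' k)) ≠ 0 := by
    intro k
    refine Finset.prod_ne_zero_iff.2 fun l hl => ?_
    exact sub_ne_zero.2 fun h => (Finset.mem_erase.1 hl).1 (hdist h)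
  -- value of last column
  have goal1 : ∀ i : Fin (m+1),
      K 1 i.castSucc (Fin.last (m+1)) = a i / (2 * (Real.pi : ℂ)) := by
    intro i
    have h := fact1 i
    rw [hTc] at h
    field_simp at h ⊢
    linear_combination -h
      + (2 * (Real.pi : ℂ) * K 1 i.castSucc (Fin.last (m+1))) * Complex.I_sq
  -- explicit value of last row
  have hKL : ∀ k : Fin (m+1),
      K 1 (Fin.last (m+1)) k.castSucc = -(b k) / (2 * (Real.pi : ℂ)) := by
    intro k
    have h := fact2 k
    rw [hTc] at h
    field_simp at h ⊢
    linear_combination -h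
      + (2 * (Real.pi : ℂ) * K 1 (Fin.last (m+1)) k.castSucc) * Complex.I_sq
  -- product rewriting
  have eP : ∀ k : Fin (m+1), (∏ l, ((lamn l - lam' k) / twoPiI))
      = (∏ l, (lamn l - lam' k)) / twoPiI ^ (m+2) := by
    intro k
    rw [Finset.prod_div_distrib, Finset.prod_const, Finset.card_univ, Fintype.card_fin]
  have eQ : ∀ k : Fin (m+1), (∏ l ∈ Finset.univ.erase k, ((lam' l - lam' k) / twoPiI))
      = (∏ l ∈ Finset.univ.erase k, (lam' l - lam' k)) / twoPiI ^ m := by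
    intro k
    rw [Finset.prod_div_distrib, Finset.prod_const,
      Finset.card_erase_of_mem (Finset.mem_univ k), Finset.card_univ, Fintype.card_fin,
      Nat.add_sub_cancel]
  have goal2 : ∀ k : Fin (m+1),
      K 1 (Fin.last (m+1)) k.castSucc
        = -((2 * (Real.pi : ℂ)) / a k) *
            (∏ l, ((lamn l - lam' k) / twoPiI)) /
            (∏ l ∈ Finset.univ.erase k, ((lam' l - lam' k) / twoPiI)) := by
    intro k
    rw [hKL k, eP k, eQ k, pow_add, hT2]
    have hTm : twoPiI ^ m ≠ 0 := pow_ne_zero _ hT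
    exact frac_aux1 _ _ _ _ _ _ (ha k) (hQ k) hc hTm (hPb k)
  refine ⟨goal1, goal2, ?_⟩
  -- off-diagonal entries
  intro i k hik
  have hδ : (1 + (lam' k - lam' i) / twoPiI) ≠ 0 := by
    intro h
    apply hres i k 1 one_ne_zero
    push_cast
    rw [mul_one]
    field_simp at h
    linear_combination -h
  have hKval : K 1 i.castSucc k.castSucc
      = (a i / twoPiI) * (-(b k) / (2 * (Real.pi : ℂ))) / (1 + (lam' k - lam' i) / twoPiI) := by
    rw [eq_div_iff hδ, ← hKL k]
    exact fact3 i k hik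
  rw [hKval, eP k, eQ k, pow_add]
  have hTm : twoPiI ^ m ≠ 0 := pow_ne_zero _ hT
  have hI : Complex.I = twoPiI / (2 * (Real.pi : ℂ)) := by
    rw [hTc]; field_simp
  rw [hI]
  exact frac_aux2 _ _ _ _ _ _ _ _ _ _ (ha k) (hQ k) hc hTm hT hδ (hPb k)
end
end

section
/- Let n ≥ 2 and let λ^(n)_1,…,λ^(n)_n and λ^(n-1)_1,…,λ^(n-1)_{n-1} be complex numbers; set λ^(n-1)_n := Σ_{l=1}^{n} λ^(n)_l − Σ_{l=1}^{n-1} λ^(n-1)_l. Assume: (λ^(n)_l − λ^(n)_k)/(2πi) ∉ ℤ for all 1 ≤ l ≠ k ≤ n; (λ^(n-1)_l − λ^(n)_k)/(2πi) ∉ ℤ for all 1 ≤ l ≤ n, 1 ≤ k ≤ n; and (λ^(n-1)_l − λ^(n-1)_j)/(2πi) ∉ ℤ for all 1 ≤ l ≠ j ≤ n−1. Define a_{jk,j} = (λ^(n-1)_j − λ^(n)_k)/(2πi), a_{jk,l} = 1 + (λ^(n-1)_l − λ^(n)_k)/(2πi) for l ≠ j, b_{jk,l} = 1 + (λ^(n)_l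 − λ^(n)_k)/(2πi), a_{nk,l} = 1 + (λ^(n-1)_l − λ^(n)_k)/(2πi) for 1 ≤ l ≤ n−1, and a_{nk,n} = (λ^(n-1)_n − λ^(n)_k)/(2πi). For 1 ≤ j ≤ n−1 and 1 ≤ k ≤ n set (U_0)_{jk} = (λ^(n)_k − λ^(n-1)_j)^{-1} · [∏_{l≠k}^{n} Γ(b_{jk,l}) / ∏_{l≠j}^{n-1} Γ(a_{jk,l})] · [∏_{l≠j}^{n-1} Γ(a_{jk,l} − a_{jk,j}) / ∏_{l≠k}^{n} Γ(b_{jk,l} − a_{jk,j})] · exp((πi/2)·a_{jk,j}), (U_{-1})_{jk} = the same expression with exp((πi/2)·a_{jk,j}) replaced by exp(−(3πi/2)·a_{jk,j}), and (U_0)_{nk} = [∏_{l≠k}^{n} Γ(b_{nk,l}) / ∏_{l=1}^{n-1} Γ(a_{nk,l})] · exp(−(πi/2)·a_{nk,n}). Then for all 1 ≤ j ≤ n−1 and all 1 ≤ k ≤ n, (U_{-1})_{jk} − (U_0)_{jk} = exp( (λ^(n-1)_n − λ^(n-1)_j)/4 ) · [ ∏_{l=1}^{n-1} Γ(1 + (λ^(n-1)_l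 − λ^(n-1)_j)/(2πi)) / ∏_{l=1}^{n} Γ(1 + (λ^(n)_l − λ^(n-1)_j)/(2πi)) ] · (U_0)_{nk}; in particular the ratio ((U_{-1})_{jk} − (U_0)_{jk})/(U_0)_{nk} is independent of k. -/
open Matrix Finset Complex

noncomputable section

/-- `a_{jk,l}` for a row index `j ≤ n−1` (value `a_{jk,j}` at `l = j`). -/
def aG (m : ℕ) (lam' : Fin (m+1) → ℂ) (lamn : Fin (m+2) → ℂ)
    (j : Fin (m+1)) (k : Fin (m+2)) (l : Fin (m+1)) : ℂ :=
  if l = j then (lam' j - lamn k) / twoPiI else 1 + (lam' l - lamn k) / twoPiI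

/-- `b_{jk,l}`. -/
def bG (m : ℕ) (lamn : Fin (m+2) → ℂ) (k l : Fin (m+2)) : ℂ :=
  1 + (lamn l - lamn k) / twoPiI

/-- `a_{nk,l}` for `1 ≤ l ≤ n−1`. -/
def aGn (m : ℕ) (lam' : Fin (m+1) → ℂ) (lamn : Fin (m+2) → ℂ)
    (k : Fin (m+2)) (l : Fin (m+1)) : ℂ :=
  1 + (lam' l - lamn k) / twoPiI

/-- The entry `(U_0)_{jk}`, `1 ≤ j ≤ n−1`. -/
def U0 (m : ℕ) (lam' : Fin (m+1) → ℂ) (lamn : Fin (m+2) → ℂ)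
    (j : Fin (m+1)) (k : Fin (m+2)) : ℂ :=
  (lamn k - lam' j)⁻¹ *
    ((∏ l ∈ Finset.univ.erase k, Complex.Gamma (bG m lamn k l)) /
      (∏ l ∈ Finset.univ.erase j, Complex.Gamma (aG m lam' lamn j k l))) *
    ((∏ l ∈ Finset.univ.erase j,
        Complex.Gamma (aG m lam' lamn j k l - aG m lam' lamn j k j)) /
      (∏ l ∈ Finset.univ.erase k,
        Complex.Gamma (bG m lamn k l - aG m lam' lamn j k j))) *
    Complex.exp (((Real.pi : ℂ) * Complex.I / 2) * aG m lam' lamn j k j)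

/-- The entry `(U_{-1})_{jk}`, `1 ≤ j ≤ n−1`. -/
def Um1 (m : ℕ) (lam' : Fin (m+1) → ℂ) (lamn : Fin (m+2) → ℂ)
    (j : Fin (m+1)) (k : Fin (m+2)) : ℂ :=
  (lamn k - lam' j)⁻¹ *
    ((∏ l ∈ Finset.univ.erase k, Complex.Gamma (bG m lamn k l)) /
      (∏ l ∈ Finset.univ.erase j, Complex.Gamma (aG m lam' lamn j k l))) *
    ((∏ l ∈ Finset.univ.erase j,
        Complex.Gamma (aG m lam' lamn j k l - aG m lam' lamn j k j)) /
      (∏ l ∈ Finset.univ.erase k,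
        Complex.Gamma (bG m lamn k l - aG m lam' lamn j k j))) *
    Complex.exp (-(3 * (Real.pi : ℂ) * Complex.I / 2) * aG m lam' lamn j k j)

/-- The entry `(U_0)_{nk}` of the last row; here `lam'n = λ^(n-1)_n`. -/
def U0n (m : ℕ) (lam' : Fin (m+1) → ℂ) (lamn : Fin (m+2) → ℂ) (lam'n : ℂ)
    (k : Fin (m+2)) : ℂ :=
  ((∏ l ∈ Finset.univ.erase k, Complex.Gamma (bG m lamn k l)) /
      (∏ l, Complex.Gamma (aGn m lam' lamn k l))) *
    Complex.exp (-((Real.pi : ℂ) * Complex.I / 2) * ((lam'n - lamn k) / twoPiI))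

lemma gamma_nz (y : ℂ) (hy : ∀ N : ℤ, y ≠ N) : Complex.Gamma y ≠ 0 := by
  apply Complex.Gamma_ne_zero
  intro n
  have := hy (-(n:ℤ))
  push_cast at this
  simpa using this

lemma not_int_add_one (y : ℂ) (hy : ∀ N : ℤ, y ≠ N) : ∀ N : ℤ, (1:ℂ) + y ≠ N := by
  intro N h
  apply hy (N - 1)
  push_cast
  linear_combination h

lemma divh (p q t : ℂ) : (1 + p/t) - q/t = 1 + (p - q)/t := by
  rw [add_sub_assoc, div_sub_div_same]

lemma key (x : ℂ) (hx : ∀ N : ℤ, x ≠ (N:ℂ)) :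
    Complex.exp (-(3 * (Real.pi:ℂ) * Complex.I / 2) * x) -
      Complex.exp (((Real.pi:ℂ) * Complex.I / 2) * x) =
    -(2 * (Real.pi:ℂ) * Complex.I) / (Complex.Gamma x * Complex.Gamma (1 - x)) *
      Complex.exp (-((Real.pi:ℂ) * Complex.I / 2) * x) := by
  have hpi : (Real.pi:ℂ) ≠ 0 := by exact_mod_cast Real.pi_ne_zero
  have hsin : Complex.sin ((Real.pi:ℂ) * x) ≠ 0 := by
    rw [Complex.sin_ne_zero_iff]
    intro k h
    apply hx k
    exact mul_left_cancel₀ hpi (by linear_combination h)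
  have hrefl := Complex.Gamma_mul_Gamma_one_sub x
  have hGG : Complex.Gamma x * Complex.Gamma (1 - x) ≠ 0 := by
    rw [hrefl]; exact div_ne_zero hpi hsin
  have hs2 : Complex.sin ((Real.pi:ℂ) * x) * (Complex.Gamma x * Complex.Gamma (1 - x)) =
      (Real.pi:ℂ) := by
    rw [hrefl]; field_simp
  have hd : Complex.exp (-(((Real.pi:ℂ) * x) * Complex.I)) -
      Complex.exp (((Real.pi:ℂ) * x) * Complex.I) =
      -(2 * Complex.I) * Complex.sin ((Real.pi:ℂ) * x) := by
    rw [Complex.sin]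
    have : Complex.I ≠ 0 := Complex.I_ne_zero
    field_simp
    ring_nf
    rw [Complex.I_sq]
    ring
  have goal2 : (Complex.exp (-(((Real.pi:ℂ) * x) * Complex.I)) -
      Complex.exp (((Real.pi:ℂ) * x) * Complex.I)) *
      (Complex.Gamma x * Complex.Gamma (1 - x)) = -(2 * (Real.pi:ℂ) * Complex.I) := by
    linear_combination (Complex.Gamma x * Complex.Gamma (1 - x)) * hd - 2*Complex.I*hs2
  have e1 : -(3 * (Real.pi:ℂ) * Complex.I / 2) * x =
      (-((Real.pi:ℂ) * Complex.I / 2) * x) + (-(((Real.pi:ℂ) * x) * Complex.I)) := by ring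
  have e2 : ((Real.pi:ℂ) * Complex.I / 2) * x =
      (-((Real.pi:ℂ) * Complex.I / 2) * x) + (((Real.pi:ℂ) * x) * Complex.I) := by ring
  rw [e1, e2, Complex.exp_add, Complex.exp_add, div_mul_eq_mul_div, eq_div_iff hGG]
  linear_combination Complex.exp (-((Real.pi:ℂ) * Complex.I / 2) * x) * goal2

/-- the Gamma-function identity expressing
`(U_{-1})_{jk} − (U_0)_{jk}` as a `k`-independent multiple of `(U_0)_{nk}`. -/
theorem stmt12 (m : ℕ) (lamn : Fin (m+2) → ℂ) (lam' : Fin (m+1) → ℂ)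
    (h1 : ∀ (l k : Fin (m+2)), l ≠ k → ∀ N : ℤ, (lamn l - lamn k) / twoPiI ≠ (N : ℂ))
    (h2 : ∀ (l k : Fin (m+2)) (N : ℤ),
      ((Fin.snoc lam' ((∑ l, lamn l) - ∑ l, lam' l) : Fin (m+2) → ℂ) l - lamn k) /
          twoPiI ≠ (N : ℂ))
    (h3 : ∀ (l j : Fin (m+1)), l ≠ j → ∀ N : ℤ, (lam' l - lam' j) / twoPiI ≠ (N : ℂ)) :
    ∀ (j : Fin (m+1)) (k : Fin (m+2)),
      Um1 m lam' lamn j k - U0 m lam' lamn j k =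
        Complex.exp (((∑ l, lamn l) - (∑ l, lam' l) - lam' j) / 4) *
          ((∏ l, Complex.Gamma (1 + (lam' l - lam' j) / twoPiI)) /
            (∏ l, Complex.Gamma (1 + (lamn l - lam' j) / twoPiI))) *
          U0n m lam' lamn ((∑ l, lamn l) - ∑ l, lam' l) k := by
  intro j k
  have hpi : (Real.pi:ℂ) ≠ 0 := by exact_mod_cast Real.pi_ne_zero
  have htw : twoPiI ≠ 0 := by
    simp [twoPiI, Real.pi_ne_zero, Complex.I_ne_zero]
  set x := (lam' j - lamn k) / twoPiI with hxdef
  have hxint : ∀ N : ℤ, x ≠ (N:ℂ) := by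
    intro N
    have := h2 j.castSucc k N
    rwa [Fin.snoc_castSucc] at this
  have hx0 : x ≠ 0 := by
    have := hxint 0
    simpa using this
  have haj : aG m lam' lamn j k j = x := by simp [aG, hxdef]
  have ha : ∀ l : Fin (m+1), ∀ N : ℤ, (lam' l - lamn k)/twoPiI ≠ (N:ℂ) := by
    intro l N
    have := h2 l.castSucc k N
    rwa [Fin.snoc_castSucc] at this
  have hbk : ∀ l : Fin (m+2), ∀ N : ℤ, (lamn l - lam' j)/twoPiI ≠ (N:ℂ) := by
    intro l N h
    apply h2 j.castSucc l (-N)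
    rw [Fin.snoc_castSucc]
    push_cast
    rw [show lam' j - lamn l = -(lamn l - lam' j) by ring, neg_div]
    linear_combination -h
  have hA : (∏ l ∈ Finset.univ.erase j, Complex.Gamma (aG m lam' lamn j k l)) ≠ 0 := by
    rw [Finset.prod_ne_zero_iff]
    intro l hl
    rw [Finset.mem_erase] at hl
    rw [aG, if_neg hl.1]
    exact gamma_nz _ (not_int_add_one _ (ha l))
  have hB : (∏ l ∈ Finset.univ.erase k, Complex.Gamma (bG m lamn k l)) ≠ 0 := by
    rw [Finset.prod_ne_zero_iff]
    intro l hl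
    rw [Finset.mem_erase] at hl
    exact gamma_nz _ (not_int_add_one _ (h1 l k hl.1))
  have hB2 : (∏ l ∈ Finset.univ.erase k,
      Complex.Gamma (1 + (lamn l - lam' j)/twoPiI)) ≠ 0 := by
    rw [Finset.prod_ne_zero_iff]
    intro l _
    exact gamma_nz _ (not_int_add_one _ (hbk l))
  have hGx : Complex.Gamma x ≠ 0 := gamma_nz _ hxint
  have hG1x : Complex.Gamma (1 - x) ≠ 0 := by
    have h1x : (1:ℂ) - x = 1 + (lamn k - lam' j)/twoPiI := by
      rw [show lamn k - lam' j = -(lam' j - lamn k) by ring, neg_div, hxdef]; ring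
    rw [h1x]
    exact gamma_nz _ (not_int_add_one _ (hbk k))
  have hprodA' : (∏ l ∈ Finset.univ.erase j,
      Complex.Gamma (aG m lam' lamn j k l - x)) =
      ∏ l ∈ Finset.univ.erase j, Complex.Gamma (1 + (lam' l - lam' j)/twoPiI) := by
    refine Finset.prod_congr rfl fun l hl => ?_
    rw [Finset.mem_erase] at hl
    rw [aG, if_neg hl.1, hxdef, divh, sub_sub_sub_cancel_right]
  have hprodB' : (∏ l ∈ Finset.univ.erase k,
      Complex.Gamma (bG m lamn k l - x)) =
      ∏ l ∈ Finset.univ.erase k, Complex.Gamma (1 + (lamn l - lam' j)/twoPiI) := by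
    refine Finset.prod_congr rfl fun l _ => ?_
    rw [bG, hxdef, divh, sub_sub_sub_cancel_right]
  have h3' : (∏ l ∈ Finset.univ.erase j,
      Complex.Gamma (1 + (lam' l - lam' j)/twoPiI)) =
      ∏ l, Complex.Gamma (1 + (lam' l - lam' j)/twoPiI) := by
    apply Finset.prod_erase
    simp [Complex.Gamma_one]
  have h4 : (∏ l, Complex.Gamma (1 + (lamn l - lam' j)/twoPiI)) =
      Complex.Gamma (1 - x) *
        ∏ l ∈ Finset.univ.erase k, Complex.Gamma (1 + (lamn l - lam' j)/twoPiI) := by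
    rw [← Finset.mul_prod_erase Finset.univ _ (Finset.mem_univ k)]
    congr 2
    rw [show lamn k - lam' j = -(lam' j - lamn k) by ring, neg_div, hxdef]
    ring
  have h5 : (∏ l, Complex.Gamma (aGn m lam' lamn k l)) =
      x * Complex.Gamma x *
        ∏ l ∈ Finset.univ.erase j, Complex.Gamma (aG m lam' lamn j k l) := by
    rw [← Finset.mul_prod_erase Finset.univ _ (Finset.mem_univ j)]
    have e : aGn m lam' lamn k j = x + 1 := by rw [aGn, hxdef]; ring
    rw [e, Complex.Gamma_add_one x hx0]
    congr 1
    refine Finset.prod_congr rfl fun l hl => ?_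
    rw [Finset.mem_erase] at hl
    rw [aG, if_neg hl.1, aGn]
  have hdiff := key x hxint
  have hc : lamn k - lam' j = -(2 * (Real.pi:ℂ) * Complex.I * x) := by
    rw [hxdef, show twoPiI = 2 * (Real.pi:ℂ) * Complex.I from rfl,
      mul_div_cancel₀ _ (by simpa [twoPiI] using htw : 2 * (Real.pi:ℂ) * Complex.I ≠ 0)]
    ring
  have hexp : Complex.exp (((∑ l, lamn l) - (∑ l, lam' l) - lam' j) / 4) *
      Complex.exp (-((Real.pi:ℂ) * Complex.I / 2) *
        (((∑ l, lamn l) - (∑ l, lam' l) - lamn k) / twoPiI)) =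
      Complex.exp (-((Real.pi:ℂ) * Complex.I / 2) * x) := by
    rw [← Complex.exp_add]
    congr 1
    have hb : ∀ w : ℂ, (-(twoPiI)/4) * (w/twoPiI) = -(w/4) := by
      intro w
      rw [div_mul_div_comm, show -twoPiI * w = -w * twoPiI by ring,
        mul_div_mul_right _ _ htw, neg_div]
    have hq : -((Real.pi:ℂ) * Complex.I / 2) = -(twoPiI)/4 := by
      rw [show twoPiI = 2 * (Real.pi:ℂ) * Complex.I from rfl]; ring
    rw [hxdef, hq, hb, hb]
    ring
  rw [Um1, U0, U0n, haj, hprodA', hprodB', ← h3', h4, h5, hc]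
  set A := ∏ l ∈ Finset.univ.erase j, Complex.Gamma (aG m lam' lamn j k l) with hAdef
  set B := ∏ l ∈ Finset.univ.erase k, Complex.Gamma (bG m lamn k l) with hBdef
  set A2 := ∏ l ∈ Finset.univ.erase j, Complex.Gamma (1 + (lam' l - lam' j)/twoPiI)
  set B2 := ∏ l ∈ Finset.univ.erase k, Complex.Gamma (1 + (lamn l - lam' j)/twoPiI)
  set G1 := Complex.Gamma x
  set G2 := Complex.Gamma (1 - x)
  set E1 := Complex.exp (-(3 * (Real.pi:ℂ) * Complex.I / 2) * x)
  set E0 := Complex.exp (((Real.pi:ℂ) * Complex.I / 2) * x)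
  set E := Complex.exp (-((Real.pi:ℂ) * Complex.I / 2) * x)
  set E4 := Complex.exp (((∑ l, lamn l) - (∑ l, lam' l) - lam' j) / 4)
  set Et := Complex.exp (-((Real.pi:ℂ) * Complex.I / 2) *
    (((∑ l, lamn l) - (∑ l, lam' l) - lamn k) / twoPiI))
  have hS : (-(2 * (Real.pi:ℂ) * Complex.I * x))⁻¹ * (B / A) * (A2 / B2) * E1 -
      (-(2 * (Real.pi:ℂ) * Complex.I * x))⁻¹ * (B / A) * (A2 / B2) * E0 =
      (-(2 * (Real.pi:ℂ) * Complex.I * x))⁻¹ * (B / A) * (A2 / B2) *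
        (-(2 * (Real.pi:ℂ) * Complex.I) / (G1 * G2) * E) := by
    linear_combination ((-(2 * (Real.pi:ℂ) * Complex.I * x))⁻¹ * (B / A) * (A2 / B2)) * hdiff
  rw [hS, ← hexp]
  clear_value x A B A2 B2 G1 G2 E1 E0 E E4 Et
  have h2pi : (2:ℂ) * (Real.pi:ℂ) * Complex.I ≠ 0 := by
    rw [show (2:ℂ) * (Real.pi:ℂ) * Complex.I = twoPiI from rfl]; exact htw
  have hT : -((2:ℂ) * (Real.pi:ℂ) * Complex.I) ≠ 0 := neg_ne_zero.mpr h2pi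
  have hcan : (-(2 * (Real.pi:ℂ) * Complex.I * x))⁻¹ *
      (-(2 * (Real.pi:ℂ) * Complex.I)) = x⁻¹ := by
    rw [show -(2 * (Real.pi:ℂ) * Complex.I * x) =
      (-(2 * (Real.pi:ℂ) * Complex.I)) * x by ring, mul_inv,
      show (-(2 * (Real.pi:ℂ) * Complex.I))⁻¹ * x⁻¹ * (-(2 * (Real.pi:ℂ) * Complex.I)) =
        ((-(2 * (Real.pi:ℂ) * Complex.I))⁻¹ * (-(2 * (Real.pi:ℂ) * Complex.I))) * x⁻¹ by ring,
      inv_mul_cancel₀ hT, one_mul]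
  linear_combination ((B/A) * (A2/B2) * (E4*Et) / (G1*G2)) * hcan
end
end
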